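/- arXiv:1110.1110 — 6 statements merged into one kernel-verified Lean document; each statement's English description precedes it below -/
import Mathlib

section
/- The probabilities p_j(\lambda, m) = ((m \wedge j)! / (m \vee j)!) \lambda^{|m-j|} e^{-\lambda} (L_{m \wedge j}^{(|m-j|)}(\lambda))^2, for j = 0, 1, 2, ..., sum to 1 for every \lambda > 0 and every nonnegative integer m. -/
/-- The generalized Laguerre polynomial
`L_k^{(α)}(x) = ∑_{i=0}^k (k+α choose k-i) (-x)^i / i!` (nonnegative integer
parameter `α`). -/
noncomputable def lag (k α : ℕ) (x : ℝ) : ℝ :=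
  ∑ i ∈ Finset.range (k + 1),
    ((k + α).choose (k - i) : ℝ) * (-x) ^ i / (Nat.factorial i : ℝ)

/-- The photon-counting probabilities
`p_j(λ,m) = ((m∧j)!/(m∨j)!) λ^{|m-j|} e^{-λ} (L_{m∧j}^{(|m-j|)}(λ))²`. -/
noncomputable def pgen (lam : ℝ) (m j : ℕ) : ℝ :=
  ((Nat.factorial (min m j) : ℝ) / (Nat.factorial (max m j) : ℝ)) *
    lam ^ (max m j - min m j) * Real.exp (-lam) *
    (lag (min m j) (max m j - min m j) lam) ^ 2

open Finset Function


private lemma fne (k : ℕ) : (Nat.factorial k : ℝ) ≠ 0 := by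
  exact_mod_cast (Nat.factorial_pos k).ne'

private lemma choose_le_two_pow (n k : ℕ) : n.choose k ≤ 2 ^ n := by
  rcases le_or_gt k n with h | h
  · calc n.choose k ≤ ∑ i ∈ Finset.range (n+1), n.choose i :=
        Finset.single_le_sum (fun i _ => Nat.zero_le _) (Finset.mem_range.2 (by omega))
    _ = 2 ^ n := Nat.sum_range_choose n
  · simp [Nat.choose_eq_zero_of_lt h]

private lemma keyL (M : ℕ) : ∀ A B : ℕ, M ≤ A →
    ∑ t ∈ Finset.range (M+1),
      (if B + t ≤ A then ((-1:ℝ)^t * (M.choose t) * ((A - t).choose B)) else 0)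
      = if M ≤ B then (((A - M).choose (B - M) : ℕ) : ℝ) else 0 := by
  induction M with
  | zero =>
    intro A B _
    rcases le_or_gt B A with h | h
    · simp [h]
    · simp [Nat.choose_eq_zero_of_lt h, (by omega : ¬ (B + 0 ≤ A))]
  | succ M ih =>
    intro A B hA
    have hA1 : M ≤ A - 1 := by omega
    have hA0 : M ≤ A := by omega
    set g1 : ℕ → ℝ := fun i => if B + i ≤ A - 1 then ((-1:ℝ)^i * (M.choose i) * (((A-1) - i).choose B)) else 0 with hg1
    set g2 : ℕ → ℝ := fun i => if B + (i+1) ≤ A then ((-1:ℝ)^(i+1) * (M.choose (i+1)) * ((A - (i+1)).choose B)) else 0 with hg2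
    set g : ℕ → ℝ := fun t => if B + t ≤ A then ((-1:ℝ)^t * (M.choose t) * ((A - t).choose B)) else 0 with hg
    have hsplit : ∀ i, (if B + (i+1) ≤ A then ((-1:ℝ)^(i+1) * ((M+1).choose (i+1)) * ((A - (i+1)).choose B)) else 0)
        = -(g1 i) + g2 i := by
      intro i
      simp only [hg1, hg2]
      by_cases h : B + (i+1) ≤ A
      · have h' : B + i ≤ A - 1 := by omega
        have he : A - (i+1) = (A-1) - i := by omega
        simp only [if_pos h, if_pos h', he, Nat.choose_succ_succ]
        push_cast
        ring
      · have h' : ¬ (B + i ≤ A - 1) := by omega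
        simp [h, h']
    calc ∑ t ∈ Finset.range (M+1+1),
          (if B + t ≤ A then ((-1:ℝ)^t * ((M+1).choose t) * ((A - t).choose B)) else 0)
        = (∑ i ∈ Finset.range (M+1),
            (if B + (i+1) ≤ A then ((-1:ℝ)^(i+1) * ((M+1).choose (i+1)) * ((A - (i+1)).choose B)) else 0))
          + (if B + 0 ≤ A then ((-1:ℝ)^0 * ((M+1).choose 0) * ((A - 0).choose B)) else 0) := by
          exact Finset.sum_range_succ' _ (M+1)
      _ = (∑ i ∈ Finset.range (M+1), (-(g1 i) + g2 i)) + g 0 := by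
          rw [Finset.sum_congr rfl (fun i _ => hsplit i)]
          congr 1
          simp [hg]
      _ = (-(∑ i ∈ Finset.range (M+1), g1 i) + ∑ i ∈ Finset.range (M+1), g2 i) + g 0 := by
          rw [Finset.sum_add_distrib, Finset.sum_neg_distrib]
      _ = (-(∑ i ∈ Finset.range (M+1), g1 i) + ∑ i ∈ Finset.range M, g2 i) + g 0 := by
          congr 2
          rw [Finset.sum_range_succ]
          simp [hg2, Nat.choose_succ_self]
      _ = -(∑ i ∈ Finset.range (M+1), g1 i) + ((∑ i ∈ Finset.range M, g (i+1)) + g 0) := by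
          rw [add_assoc]
      _ = -(∑ i ∈ Finset.range (M+1), g1 i) + (∑ t ∈ Finset.range (M+1), g t) := by
          rw [← Finset.sum_range_succ' g M]
      _ = -(if M ≤ B then ((((A-1) - M).choose (B - M) : ℕ) : ℝ) else 0)
          + (if M ≤ B then (((A - M).choose (B - M) : ℕ) : ℝ) else 0) := by
          rw [ih (A-1) B hA1, ih A B hA0]
      _ = if M+1 ≤ B then (((A - (M+1)).choose (B - (M+1)) : ℕ) : ℝ) else 0 := by
          rcases le_or_gt (M+1) B with hB | hB
          · have h1 : M ≤ B := by omega
            have e1 : A - M = (A - (M+1)) + 1 := by omega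
            have e2 : B - M = (B - (M+1)) + 1 := by omega
            have e3 : (A-1) - M = A - (M+1) := by omega
            simp only [if_pos h1, if_pos hB, e1, e2, e3, Nat.choose_succ_succ]
            push_cast
            ring
          · rcases le_or_gt M B with h1 | h1
            · have hBM : B - M = 0 := by omega
              simp [hBM, if_pos h1, if_neg (by omega : ¬ (M+1 ≤ B))]
              all_goals intro h; omega
            · simp [if_neg (by omega : ¬ (M ≤ B)), if_neg (by omega : ¬ (M+1 ≤ B))]
              all_goals intro h; omega

private lemma keyN (m n : ℕ) :
    ∑ q ∈ Finset.range (m+1), ∑ q' ∈ Finset.range (m+1),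
      (if q ≤ n ∧ q' ≤ n then
        ((-1:ℝ)^(q+q') * (n.choose q) * (m.choose q') * ((m+n-q-q').choose (m-q)))
      else 0) = 1 := by
  rw [Finset.sum_eq_single_of_mem 0 (Finset.mem_range.2 (by omega))]
  · have h0 : ∀ q' ∈ Finset.range (m+1),
        (if 0 ≤ n ∧ q' ≤ n then
          ((-1:ℝ)^(0+q') * (n.choose 0) * (m.choose q') * ((m+n-0-q').choose (m-0)))
        else 0)
        = (if m + q' ≤ m + n then ((-1:ℝ)^q' * (m.choose q') * (((m+n) - q').choose m)) else 0) := by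
      intro q' _
      by_cases h : q' ≤ n
      · simp only [if_pos (by omega : m + q' ≤ m + n), if_pos (And.intro (Nat.zero_le n) h)]
        rw [(by omega : m + n - 0 - q' = (m+n) - q'), (by omega : m - 0 = m), Nat.choose_zero_right]
        push_cast
        ring
      · simp [h, (by omega : ¬ (m + q' ≤ m + n))]
    rw [Finset.sum_congr rfl h0, keyL m (m+n) m (by omega)]
    simp
  · intro q hq hq0
    have hqm : q ≤ m := by have := Finset.mem_range.1 hq; omega
    by_cases hqn : q ≤ n
    · have h1 : ∀ q' ∈ Finset.range (m+1),
          (if q ≤ n ∧ q' ≤ n then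
            ((-1:ℝ)^(q+q') * (n.choose q) * (m.choose q') * ((m+n-q-q').choose (m-q)))
          else 0)
          = ((-1:ℝ)^q * (n.choose q)) *
            (if (m-q) + q' ≤ (m+n-q) then ((-1:ℝ)^q' * (m.choose q') * (((m+n-q) - q').choose (m-q))) else 0) := by
        intro q' _
        by_cases h : q' ≤ n
        · simp only [if_pos (And.intro hqn h), if_pos (by omega : (m-q) + q' ≤ (m+n-q))]
          rw [(by omega : m + n - q - q' = (m+n-q) - q'), pow_add]
          ring
        · rw [if_neg (by omega : ¬ (q ≤ n ∧ q' ≤ n)), if_neg (by omega : ¬ ((m-q) + q' ≤ (m+n-q)))]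
          ring
      rw [Finset.sum_congr rfl h1, ← Finset.mul_sum, keyL m (m+n-q) (m-q) (by omega)]
      have : ¬ (m ≤ m - q) := by omega
      simp [this]
    · have : ∀ q' ∈ Finset.range (m+1),
          (if q ≤ n ∧ q' ≤ n then
            ((-1:ℝ)^(q+q') * (n.choose q) * (m.choose q') * ((m+n-q-q').choose (m-q)))
          else 0) = 0 := by
        intro q' _
        simp [hqn]
      rw [Finset.sum_congr rfl this]
      simp

noncomputable def Gt (lam : ℝ) (m j q q' : ℕ) : ℝ :=
  if m ≤ j + q ∧ m ≤ j + q' then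
    (-1:ℝ)^(q+q') * (j.choose (m-q)) * (m.choose q') * lam^(j+q+q'-m) /
      (Nat.factorial q * Nat.factorial ((j+q')-m))
  else 0

noncomputable def Ht (lam : ℝ) (m q q' n : ℕ) : ℝ :=
  if q ≤ n ∧ q' ≤ n then
    (-1:ℝ)^(q+q') * ((m+n-q-q').choose (m-q)) * (m.choose q') * lam^n /
      (Nat.factorial q * Nat.factorial (n-q))
  else 0

private lemma GH (lam : ℝ) (m q q' n : ℕ) (hq : q ≤ m) (hq' : q' ≤ m)
    (hn : q ≤ n) (hn' : q' ≤ n) :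
    Gt lam m (m+n-q-q') q q' = Ht lam m q q' n := by
  have h1 : m ≤ (m+n-q-q') + q := by omega
  have h2 : m ≤ (m+n-q-q') + q' := by omega
  rw [Gt, Ht, if_pos ⟨h1, h2⟩, if_pos ⟨hn, hn'⟩,
    (by omega : (m+n-q-q') + q + q' - m = n),
    (by omega : ((m+n-q-q') + q') - m = n - q)]

private lemma sumH (lam : ℝ) (m n : ℕ) :
    ∑ q ∈ Finset.range (m+1), ∑ q' ∈ Finset.range (m+1), Ht lam m q q' n
      = lam ^ n / (Nat.factorial n : ℝ) := by
  have hpt : ∀ q ∈ Finset.range (m+1), ∀ q' ∈ Finset.range (m+1),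
      Ht lam m q q' n = lam ^ n / (Nat.factorial n : ℝ) *
        (if q ≤ n ∧ q' ≤ n then
          ((-1:ℝ)^(q+q') * (n.choose q) * (m.choose q') * ((m+n-q-q').choose (m-q)))
        else 0) := by
    intro q _ q' _
    by_cases h : q ≤ n ∧ q' ≤ n
    · rw [Ht, if_pos h, if_pos h, Nat.cast_choose ℝ h.1]
      have h1 : (Nat.factorial q : ℝ) ≠ 0 := fne q
      have h2 : (Nat.factorial (n-q) : ℝ) ≠ 0 := fne _
      have h3 : (Nat.factorial n : ℝ) ≠ 0 := fne n
      field_simp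
    · rw [Ht, if_neg h, if_neg h, mul_zero]
  rw [Finset.sum_congr rfl (fun q hq => Finset.sum_congr rfl (hpt q hq))]
  simp only [← Finset.mul_sum]
  rw [keyN, mul_one]

private lemma sum_shift (F : ℕ → ℝ) (a N : ℕ) (ha : a ≤ N) (h0 : ∀ q, q < a → F q = 0) :
    ∑ q ∈ Finset.range N, F q = ∑ i ∈ Finset.range (N - a), F (a + i) := by
  have key : ∑ q ∈ Finset.Ico 0 N, F q = ∑ q ∈ Finset.Ico a N, F q := by
    rw [← Finset.sum_Ico_consecutive F (Nat.zero_le a) ha,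
      Finset.sum_eq_zero (fun q hq => h0 q (Finset.mem_Ico.1 hq).2), zero_add]
  rw [Finset.range_eq_Ico, key, Finset.sum_Ico_eq_sum_range]

private lemma pgen_eq (lam : ℝ) (m j : ℕ) :
    pgen lam m j = Real.exp (-lam) *
      ∑ q ∈ Finset.range (m+1), ∑ q' ∈ Finset.range (m+1), Gt lam m j q q' := by
  rcases le_or_gt m j with hmj | hjm
  · -- case m ≤ j
    have hlag : lag m (j-m) lam
        = ∑ q ∈ Finset.range (m+1), ((j.choose (m-q) : ℝ) * (-lam)^q / Nat.factorial q) := by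
      rw [lag, (by omega : m + (j - m) = j)]
    have hpt : ∀ q ∈ Finset.range (m+1), ∀ q' ∈ Finset.range (m+1),
        Gt lam m j q q' =
          (((Nat.factorial m : ℝ) / (Nat.factorial j : ℝ)) * lam ^ (j-m) *
            ((j.choose (m-q) : ℝ) * (-lam)^q / Nat.factorial q)) *
          ((j.choose (m-q') : ℝ) * (-lam)^(q') / Nat.factorial q') := by
      intro q hq q' hq'
      have hqm : q ≤ m := by have := Finset.mem_range.1 hq; omega
      have hq'm : q' ≤ m := by have := Finset.mem_range.1 hq'; omega
      rw [Gt, if_pos ⟨by omega, by omega⟩,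
        (by omega : j+q+q'-m = (j-m)+q+q'), pow_add, pow_add,
        Nat.cast_choose ℝ hq'm,
        Nat.cast_choose ℝ (by omega : m - q' ≤ j),
        Nat.cast_choose ℝ (by omega : m - q ≤ j),
        (by omega : j - (m - q') = (j + q') - m),
        (by omega : j - (m - q) = (j + q) - m)]
      have h1 := fne q
      have h2 := fne q'
      have h3 := fne ((j+q')-m)
      have h4 := fne ((j+q)-m)
      have h5 := fne (m-q)
      have h6 := fne (m-q')
      have h7 := fne m
      have h8 := fne j
      field_simp
      ring
    rw [Finset.sum_congr rfl (fun q hq => Finset.sum_congr rfl (hpt q hq)),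
      pgen, min_eq_left hmj, max_eq_right hmj, hlag]
    simp only [← Finset.mul_sum, ← Finset.sum_mul]
    ring
  · -- case j < m
    have hjm' : j ≤ m := le_of_lt hjm
    have hlag : lag j (m-j) lam
        = ∑ i ∈ Finset.range (j+1), ((m.choose (j-i) : ℝ) * (-lam)^i / Nat.factorial i) := by
      rw [lag, (by omega : j + (m - j) = m)]
    have hzero : ∀ q, q < m - j →
        ∑ q' ∈ Finset.range (m+1), Gt lam m j q q' = 0 := by
      intro q hq
      apply Finset.sum_eq_zero
      intro q' _
      rw [Gt, if_neg (by omega)]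
    have hzero2 : ∀ q q', q' < m - j → Gt lam m j q q' = 0 := by
      intro q q' hq'
      rw [Gt, if_neg (by omega)]
    rw [sum_shift _ (m-j) (m+1) (by omega) hzero]
    rw [Finset.sum_congr rfl (fun i _ =>
      sum_shift (fun q' => Gt lam m j ((m-j)+i) q') (m-j) (m+1) (by omega)
        (fun q' hq' => hzero2 _ q' hq'))]
    rw [(by omega : (m+1) - (m-j) = j+1)]
    have hpt : ∀ i ∈ Finset.range (j+1), ∀ i' ∈ Finset.range (j+1),
        Gt lam m j ((m-j)+i) ((m-j)+i') =
          (((Nat.factorial j : ℝ) / (Nat.factorial m : ℝ)) * lam ^ (m-j) *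
            ((m.choose (j-i) : ℝ) * (-lam)^i / Nat.factorial i)) *
          ((m.choose (j-i') : ℝ) * (-lam)^(i') / Nat.factorial i') := by
      intro i hi i' hi'
      have hij : i ≤ j := by have := Finset.mem_range.1 hi; omega
      have hij' : i' ≤ j := by have := Finset.mem_range.1 hi'; omega
      rw [Gt, if_pos ⟨by omega, by omega⟩,
        (by omega : j + ((m-j)+i) + ((m-j)+i') - m = (m-j) + (i+i')),
        (by omega : m - ((m-j)+i) = j - i),
        (by omega : (j + ((m-j)+i')) - m = i'),
        pow_add lam (m-j) (i+i'), pow_add lam i i',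
        (by omega : (m-j)+i + ((m-j)+i') = 2*(m-j) + (i+i')),
        pow_add (-1:ℝ) (2*(m-j)) (i+i'), pow_mul (-1:ℝ) 2 (m-j), neg_one_sq, one_pow, one_mul,
        Nat.cast_choose ℝ (by omega : j - i ≤ j),
        Nat.cast_choose ℝ (by omega : (m-j)+i' ≤ m),
        Nat.cast_choose ℝ (by omega : j - i ≤ m),
        Nat.cast_choose ℝ (by omega : j - i' ≤ m),
        (by omega : j - (j - i) = i),
        (by omega : m - ((m-j)+i') = j - i'),
        (by omega : m - (j - i) = (m-j)+i),
        (by omega : m - (j - i') = (m-j)+i')]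
      have h1 := fne i
      have h2 := fne i'
      have h3 := fne (j-i)
      have h4 := fne (j-i')
      have h5 := fne ((m-j)+i)
      have h6 := fne ((m-j)+i')
      have h7 := fne m
      have h8 := fne j
      field_simp
      ring
    rw [Finset.sum_congr rfl (fun i hi => Finset.sum_congr rfl (hpt i hi)),
      pgen, min_eq_right hjm', max_eq_left hjm', hlag]
    simp only [← Finset.mul_sum, ← Finset.sum_mul]
    ring

private lemma summable_shift (x : ℝ) (k : ℕ) :
    Summable (fun n : ℕ => x ^ n / (Nat.factorial (n - k) : ℝ)) := by
  rw [← summable_nat_add_iff k]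
  apply Summable.congr ((Real.summable_pow_div_factorial x).mul_right (x ^ k))
  intro n
  simp only [Nat.add_sub_cancel, pow_add]
  ring

private lemma summable_Ht (lam : ℝ) (hlam : 0 < lam) (m q q' : ℕ)
    (hq : q ≤ m) (hq' : q' ≤ m) :
    Summable (fun n => Ht lam m q q' n) := by
  apply Summable.of_norm_bounded (g :=
    (fun n => (4:ℝ)^m * ((2*lam) ^ n / (Nat.factorial (n - m) : ℝ))))
    ((summable_shift (2*lam) m).mul_left _)
  intro n
  by_cases h : q ≤ n ∧ q' ≤ n
  · rw [Ht, if_pos h, Real.norm_eq_abs]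
    have habs : |(-1:ℝ)^(q+q') * ((m+n-q-q').choose (m-q)) * (m.choose q') * lam^n /
        (Nat.factorial q * Nat.factorial (n-q))|
        = (((m+n-q-q').choose (m-q) : ℝ)) * (m.choose q') * lam^n /
          (Nat.factorial q * Nat.factorial (n-q)) := by
      rw [abs_div, abs_mul, abs_mul, abs_mul, abs_pow, abs_pow, abs_neg, abs_one, one_pow,
        one_mul, abs_of_pos hlam, abs_mul]
      simp [Nat.abs_cast]
    rw [habs]
    have e1 : (((m+n-q-q').choose (m-q)) : ℝ) ≤ 2^m * 2^n := by
      have h1 : ((m+n-q-q').choose (m-q)) ≤ 2^(m+n) :=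
        le_trans (choose_le_two_pow _ _) (Nat.pow_le_pow_right (by norm_num) (by omega))
      calc (((m+n-q-q').choose (m-q)) : ℝ) ≤ ((2:ℝ))^(m+n) := by exact_mod_cast h1
        _ = 2^m * 2^n := pow_add 2 m n
    have e2 : ((m.choose q') : ℝ) ≤ 2^m := by exact_mod_cast choose_le_two_pow m q'
    have e3 : ((Nat.factorial (n-m) : ℝ)) ≤ (Nat.factorial q * Nat.factorial (n-q) : ℝ) := by
      have : Nat.factorial (n-m) ≤ Nat.factorial q * Nat.factorial (n-q) :=
        le_trans (Nat.factorial_le (by omega)) (Nat.le_mul_of_pos_left _ (Nat.factorial_pos q))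
      exact_mod_cast this
    have hb : (((m+n-q-q').choose (m-q)) : ℝ) * (m.choose q') * lam^n ≤
        (2^m * 2^n) * 2^m * lam^n := by
      apply mul_le_mul _ le_rfl (by positivity) (by positivity)
      exact mul_le_mul e1 e2 (by positivity) (by positivity)
    calc (((m+n-q-q').choose (m-q)) : ℝ) * (m.choose q') * lam^n /
          (Nat.factorial q * Nat.factorial (n-q))
        ≤ ((2^m * 2^n) * 2^m * lam^n) / (Nat.factorial (n-m)) := by
          apply div_le_div₀ (by positivity) hb (by positivity) e3
      _ = (4:ℝ)^m * ((2*lam) ^ n / (Nat.factorial (n - m) : ℝ)) := by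
          rw [mul_pow, (by norm_num : (4:ℝ) = 2*2), mul_pow]
          ring
  · rw [Ht, if_neg h]
    simp
    positivity

private lemma tsum_and_summable (lam : ℝ) (hlam : 0 < lam) (m q q' : ℕ)
    (hq : q ≤ m) (hq' : q' ≤ m) :
    (∑' j, Gt lam m j q q' = ∑' n, Ht lam m q q' n) ∧
      Summable (fun j => Gt lam m j q q') := by
  have hi' : ∀ x : support (fun n => Ht lam m q q' n), q ≤ (x:ℕ) ∧ q' ≤ (x:ℕ) := by
    rintro ⟨n, hn⟩
    by_contra h
    exact (Function.mem_support.mp hn) (by rw [Ht, if_neg h])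
  set i : support (fun n => Ht lam m q q' n) → ℕ := fun x => m + (x:ℕ) - q - q' with hidef
  have hinj : Function.Injective i := by
    rintro a b hab
    have ha := hi' a; have hb := hi' b
    simp only [hidef] at hab
    have : (a:ℕ) = (b:ℕ) := by omega
    exact Subtype.ext this
  have hfg : ∀ x : support (fun n => Ht lam m q q' n),
      Gt lam m (i x) q q' = Ht lam m q q' x := by
    intro x
    exact GH lam m q q' x hq hq' (hi' x).1 (hi' x).2
  have hsupp : support (fun j => Gt lam m j q q') ⊆ Set.range i := by
    intro j hj
    have hg : m ≤ j + q ∧ m ≤ j + q' := by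
      by_contra h
      exact (Function.mem_support.mp hj) (by rw [Gt, if_neg h])
    have hn1 : q ≤ j+q+q'-m := by omega
    have hn2 : q' ≤ j+q+q'-m := by omega
    have hmem : (j+q+q'-m) ∈ support (fun n => Ht lam m q q' n) := by
      have hGH := GH lam m q q' (j+q+q'-m) hq hq' hn1 hn2
      rw [(by omega : m + (j+q+q'-m) - q - q' = j)] at hGH
      rw [Function.mem_support, ← hGH]
      exact Function.mem_support.mp hj
    refine ⟨⟨_, hmem⟩, ?_⟩
    simp only [hidef]
    omega
  refine ⟨tsum_eq_tsum_of_ne_zero_bij i hinj hsupp hfg, ?_⟩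
  obtain ⟨a, ha⟩ := summable_Ht lam hlam m q q' hq hq'
  exact ⟨a, (hasSum_iff_hasSum_of_ne_zero_bij i hinj hsupp hfg).2 ha⟩

/-- The probabilities `p_j(λ,m)` sum to `1` for every `λ > 0` and every
nonnegative integer `m`. -/
theorem pgen_tsum_eq_one (lam : ℝ) (hlam : 0 < lam) (m : ℕ) :
    ∑' j : ℕ, pgen lam m j = 1 := by
  have hmem : ∀ q : ℕ, q ∈ Finset.range (m+1) → q ≤ m := by
    intro q hq; have := Finset.mem_range.1 hq; omega
  have hT : ∑' j : ℕ, ∑ q ∈ Finset.range (m+1), ∑ q' ∈ Finset.range (m+1), Gt lam m j q q'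
      = Real.exp lam := by
    calc ∑' j : ℕ, ∑ q ∈ Finset.range (m+1), ∑ q' ∈ Finset.range (m+1), Gt lam m j q q'
        = ∑ q ∈ Finset.range (m+1), ∑' j : ℕ, ∑ q' ∈ Finset.range (m+1), Gt lam m j q q' := by
          apply Summable.tsum_finsetSum
          intro q hq
          exact summable_sum (fun q' hq' =>
            (tsum_and_summable lam hlam m q q' (hmem q hq) (hmem q' hq')).2)
      _ = ∑ q ∈ Finset.range (m+1), ∑ q' ∈ Finset.range (m+1), ∑' j : ℕ, Gt lam m j q q' := by
          apply Finset.sum_congr rfl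
          intro q hq
          exact Summable.tsum_finsetSum (fun q' hq' =>
            (tsum_and_summable lam hlam m q q' (hmem q hq) (hmem q' hq')).2)
      _ = ∑ q ∈ Finset.range (m+1), ∑ q' ∈ Finset.range (m+1), ∑' n : ℕ, Ht lam m q q' n := by
          apply Finset.sum_congr rfl; intro q hq
          apply Finset.sum_congr rfl; intro q' hq'
          exact (tsum_and_summable lam hlam m q q' (hmem q hq) (hmem q' hq')).1
      _ = ∑' n : ℕ, ∑ q ∈ Finset.range (m+1), ∑ q' ∈ Finset.range (m+1), Ht lam m q q' n := by
          rw [Summable.tsum_finsetSum (fun q hq => summable_sum (fun q' hq' =>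
            summable_Ht lam hlam m q q' (hmem q hq) (hmem q' hq')))]
          apply Finset.sum_congr rfl
          intro q hq
          rw [Summable.tsum_finsetSum (fun q' hq' => summable_Ht lam hlam m q q' (hmem q hq) (hmem q' hq'))]
      _ = ∑' n : ℕ, lam ^ n / (Nat.factorial n : ℝ) := tsum_congr (sumH lam m)
      _ = Real.exp lam := by
          rw [Real.exp_eq_exp_ℝ, NormedSpace.exp_eq_tsum_div]
  calc ∑' j : ℕ, pgen lam m j
      = ∑' j : ℕ, Real.exp (-lam) *
          ∑ q ∈ Finset.range (m+1), ∑ q' ∈ Finset.range (m+1), Gt lam m j q q' :=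
        tsum_congr (pgen_eq lam m)
    _ = Real.exp (-lam) *
          ∑' j : ℕ, ∑ q ∈ Finset.range (m+1), ∑ q' ∈ Finset.range (m+1), Gt lam m j q q' :=
        tsum_mul_left
    _ = Real.exp (-lam) * Real.exp lam := by rw [hT]
    _ = 1 := by rw [← Real.exp_add]; simp
end

section
/- The characteristic function of the generalized Poisson distribution \mathcal{P}(\lambda, m), namely \varphi(u) = \sum_{j=0}^\infty e^{iju} p_j(\lambda, m), equals \exp(\lambda(e^{iu}-1)) e^{imu} L_m(2\lambda(1-\cos u)) for all real u. -/
open Finset Complex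
noncomputable def aa (c : ℂ) : ℕ → ℕ → ℂ
  | 0, j => c ^ j / (Nat.factorial j : ℂ)
  | n+1, 0 => -c * aa c n 0
  | n+1, j+1 => aa c n j - c * aa c n (j+1)

lemma aa_zero (c : ℂ) (n : ℕ) : aa c n 0 = (-c) ^ n := by
  induction n with
  | zero => simp [aa]
  | succ n ih => rw [aa, ih]; ring

lemma aa_ite (c : ℂ) (n j : ℕ) :
    aa c (n+1) j = (if j = 0 then 0 else aa c n (j-1)) - c * aa c n j := by
  cases j with
  | zero => simp [aa]
  | succ j => simp [aa]

lemma fact_ne (j : ℕ) : (Nat.factorial j : ℂ) ≠ 0 :=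
  Nat.cast_ne_zero.mpr (Nat.factorial_ne_zero j)

lemma aa_deriv (c : ℂ) : ∀ (n j : ℕ), ((j : ℂ) + 1) * aa c n (j+1)
    = c * aa c n j + (n : ℂ) * aa c (n-1) j := by
  intro n
  induction n with
  | zero =>
    intro j
    have h3 : aa c 0 (j+1) = c^(j+1)/((Nat.factorial (j+1) : ℕ) : ℂ) := rfl
    have h0 : aa c 0 j = c^j/((Nat.factorial j : ℕ) : ℂ) := rfl
    rw [h3, h0, Nat.factorial_succ]
    simp only [Nat.cast_zero, zero_mul, add_zero]
    push_cast
    have h2 := fact_ne j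
    have h1 : ((j : ℂ) + 1) ≠ 0 := Nat.cast_add_one_ne_zero j
    field_simp
    ring
  | succ n ih =>
    have aux : ∀ (j : ℕ), ((j : ℂ) - n) * aa c n j
        = c * (if j = 0 then 0 else aa c n (j-1)) + (n : ℂ) * c * aa c (n-1) j := by
      intro j
      cases j with
      | zero =>
        simp only [if_pos rfl, mul_zero, zero_add]
        rw [aa_zero]
        cases n with
        | zero => simp
        | succ k =>
          rw [show (k + 1 - 1) = k from rfl, aa_zero]
          push_cast
          ring
      | succ j' =>
        have e := ih j'
        simp only [Nat.succ_sub_one, if_neg (Nat.succ_ne_zero j'), Nat.add_sub_cancel]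
        cases n with
        | zero =>
          push_cast at e ⊢
          linear_combination e
        | succ k =>
          have hrec : aa c (k+1) (j'+1) = aa c k j' - c * aa c k (j'+1) := rfl
          rw [show (k + 1 - 1) = k from rfl] at e ⊢
          push_cast at e ⊢
          linear_combination e - ((k:ℂ)+1) * hrec
    intro j
    have hd : aa c (n+1) (j+1) = aa c n j - c * aa c n (j+1) := rfl
    have hi := aa_ite c n j
    have e := ih j
    have a := aux j
    rw [show (n + 1 - 1) = n from rfl]
    push_cast
    linear_combination ((j:ℂ)+1)*hd - c*hi + a - c*e

lemma aa_gf (c z : ℂ) : ∀ n : ℕ, HasSum (fun j => aa c n j * z ^ j)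
    (Complex.exp (c * z) * (z - c) ^ n) := by
  intro n
  induction n with
  | zero =>
    have h := NormedSpace.expSeries_div_hasSum_exp (c * z)
    rw [← Complex.exp_eq_exp_ℂ] at h
    have hfun : (fun j : ℕ => aa c 0 j * z ^ j) = fun j : ℕ => (c*z)^j / (Nat.factorial j : ℂ) := by
      funext j
      show c ^ j / (Nat.factorial j : ℂ) * z ^ j = _
      rw [mul_pow]; ring
    rw [hfun, pow_zero, mul_one]
    exact h
  | succ n ih =>
    set S := Complex.exp (c * z) * (z - c) ^ n with hS
    set f : ℕ → ℂ := fun j => (if j = 0 then 0 else aa c n (j-1)) * z ^ j with hf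
    have hfun : (fun j => f (j + 1)) = fun j => z * (aa c n j * z ^ j) := by
      funext j
      simp only [hf, Nat.succ_ne_zero, if_false, Nat.add_sub_cancel, pow_succ]
      ring
    have h3 : HasSum (fun j => f (j + 1)) (z * S) := by
      rw [hfun]; exact ih.mul_left z
    have h4 : HasSum f (z * S + ∑ i ∈ Finset.range 1, f i) := (hasSum_nat_add_iff 1).mp h3
    have h5 : HasSum (fun j => f j - c * (aa c n j * z ^ j))
        ((z * S + ∑ i ∈ Finset.range 1, f i) - c * S) := h4.sub (ih.mul_left c)
    have hfun2 : (fun j => aa c (n+1) j * z ^ j) = fun j => f j - c * (aa c n j * z ^ j) := by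
      funext j
      rw [aa_ite, hf]
      ring
    have hval : Complex.exp (c * z) * (z - c) ^ (n+1)
        = (z * S + ∑ i ∈ Finset.range 1, f i) - c * S := by
      simp only [Finset.range_one, Finset.sum_singleton, hf, hS]
      norm_num
      ring
    rw [hfun2, hval]
    exact h5

noncomputable def gsum (c t : ℂ) (n m K : ℕ) : ℂ :=
  ∑ k ∈ Finset.range K,
    ((n.choose k * m.choose k * Nat.factorial k : ℕ) : ℂ) * (c*(t-1))^((n-k)+(m-k)) * t^k

noncomputable def G (c t : ℂ) (n m : ℕ) : ℂ :=
  Complex.exp (t * c^2) * gsum c t n m (min n m + 1)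

lemma gsum_extend (c t : ℂ) (n m K : ℕ) (h : min n m < K) :
    gsum c t n m K = gsum c t n m (min n m + 1) := by
  rw [gsum, gsum]
  refine (Finset.sum_subset (Finset.range_subset_range.2 h) ?_).symm
  intro k hk hnk
  simp only [Finset.mem_range, not_lt] at hnk
  have : n.choose k = 0 ∨ m.choose k = 0 := by
    rcases Nat.lt_or_ge (min n m) n with hh | hh
    · right
      have : m < k := by omega
      exact Nat.choose_eq_zero_of_lt this
    · left
      have : n < k := by omega
      exact Nat.choose_eq_zero_of_lt this
  rcases this with h0 | h0 <;> simp [h0]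

lemma G_rec (c t : ℂ) (n m : ℕ) :
    G c t n (m+1) = t*c*G c t n m + t*(n:ℂ)*G c t (n-1) m - c*G c t n m := by
  cases n with
  | zero =>
    simp only [G, gsum, Nat.cast_zero, Nat.zero_sub, Nat.min_def, Nat.zero_le, if_pos,
      zero_mul, Finset.range_one, Finset.sum_singleton]
    norm_num
    ring
  | succ N =>
    have e1 : G c t (N+1) (m+1) = Complex.exp (t*c^2) * gsum c t (N+1) (m+1) (N+m+3) := by
      rw [G, ← gsum_extend c t (N+1) (m+1) (N+m+3) (by omega)]
    have e2 : G c t (N+1) m = Complex.exp (t*c^2) * gsum c t (N+1) m (N+m+3) := by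
      rw [G, ← gsum_extend c t (N+1) m (N+m+3) (by omega)]
    have e3 : G c t N m = Complex.exp (t*c^2) * gsum c t N m (N+m+2) := by
      rw [G, ← gsum_extend c t N m (N+m+2) (by omega)]
    rw [show N + 1 - 1 = N from rfl, e1, e2, e3]
    have main : gsum c t (N+1) (m+1) (N+m+3) - (t*c - c) * gsum c t (N+1) m (N+m+3)
        = t*((N:ℂ)+1) * gsum c t N m (N+m+2) := by
      rw [gsum, gsum, gsum, Finset.mul_sum, ← Finset.sum_sub_distrib,
        Finset.sum_range_succ', Finset.mul_sum]
      have h0 : (((N+1).choose 0 * (m+1).choose 0 * Nat.factorial 0 : ℕ) : ℂ)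
            * (c*(t-1))^((N+1-0)+(m+1-0)) * t^0
          - (t*c - c) * ((((N+1).choose 0 * m.choose 0 * Nat.factorial 0 : ℕ) : ℂ)
            * (c*(t-1))^((N+1-0)+(m-0)) * t^0) = 0 := by
        simp only [Nat.choose_zero_right, Nat.factorial_zero, Nat.sub_zero, mul_one, pow_zero,
          Nat.cast_one, one_mul]
        rw [show (N+1)+(m+1) = ((N+1)+m)+1 from rfl, pow_succ]
        ring
      rw [h0, add_zero]
      refine Finset.sum_congr rfl ?_
      intro k _
      have hch : (((N+1).choose (k+1) : ℕ) : ℂ) * ((Nat.factorial (k+1) : ℕ) : ℂ)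
          = ((N:ℂ)+1) * (((N.choose k : ℕ) : ℂ) * ((Nat.factorial k : ℕ) : ℂ)) := by
        have h := Nat.add_one_mul_choose_eq N k
        have : (N+1).choose (k+1) * Nat.factorial (k+1) = (N+1) * (N.choose k * Nat.factorial k) := by
          rw [show Nat.factorial (k+1) = (k+1) * Nat.factorial k from rfl]
          calc (N+1).choose (k+1) * ((k+1) * Nat.factorial k)
              = ((N+1).choose (k+1) * (k+1)) * Nat.factorial k := by ring
            _ = ((N+1) * N.choose k) * Nat.factorial k := by rw [← h]
            _ = (N+1) * (N.choose k * Nat.factorial k) := by ring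
        exact_mod_cast congrArg (fun x : ℕ => (x : ℂ)) this
      have hss : (N+1) - (k+1) = N - k := Nat.succ_sub_succ N k
      have hms : (m+1) - (k+1) = m - k := Nat.succ_sub_succ m k
      rcases le_or_gt (k+1) m with hkm | hkm
      · have hexp : (N-k) + (m-k) = ((N-k) + (m-(k+1))) + 1 := by omega
        rw [Nat.choose_succ_succ m k, hss, hms, hexp, pow_succ, pow_add]
        push_cast
        linear_combination ((m.choose k : ℂ) * (c*(t-1))^(N-k) * (c*(t-1))^(m-(k+1))
          * (c*(t-1)) * t^(k+1)) * hch
      · have hz : m.choose (k+1) = 0 := Nat.choose_eq_zero_of_lt hkm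
        rw [Nat.choose_succ_succ m k, hss, hms, hz, pow_add]
        push_cast
        linear_combination ((m.choose k : ℂ) * (c*(t-1))^(N-k) * (c*(t-1))^(m-k)
          * t^(k+1)) * hch
    push_cast
    linear_combination Complex.exp (t*c^2) * main

lemma main_hasSum (c t : ℂ) : ∀ m n : ℕ,
    HasSum (fun j => ((Nat.factorial j : ℕ) : ℂ) * t^j * aa c n j * aa c m j) (G c t n m) := by
  intro m
  induction m with
  | zero =>
    intro n
    have h := aa_gf c (t*c) n
    have hfun : (fun j => ((Nat.factorial j : ℕ):ℂ) * t^j * aa c n j * aa c 0 j)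
        = fun j => aa c n j * (t*c)^j := by
      funext j
      show ((Nat.factorial j : ℕ):ℂ) * t^j * aa c n j * (c^j / ((Nat.factorial j : ℕ):ℂ)) = _
      rw [mul_pow]
      field_simp [fact_ne j]
    have hval : G c t n 0 = Complex.exp (c*(t*c)) * ((t*c) - c)^n := by
      rw [G, gsum]
      simp only [Nat.min_zero, zero_add, Finset.range_one, Finset.sum_singleton,
        Nat.choose_zero_right, Nat.choose_self, Nat.factorial_zero, Nat.sub_zero,
        Nat.zero_sub, Nat.add_zero, pow_zero, mul_one, Nat.mul_one, Nat.one_mul,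
        Nat.cast_one, one_mul]
      rw [show c*(t-1) = t*c - c by ring, show t*c^2 = c*(t*c) by ring]
    rw [hfun, hval]
    exact h
  | succ m ih =>
    intro n
    set f : ℕ → ℂ :=
      fun j => ((Nat.factorial j : ℕ):ℂ) * t^j * aa c n j * (if j = 0 then 0 else aa c m (j-1))
      with hf
    have hshift : (fun j => f (j+1)) = fun j =>
        t*c*(((Nat.factorial j : ℕ):ℂ) * t^j * aa c n j * aa c m j)
        + t*(n:ℂ)*(((Nat.factorial j : ℕ):ℂ) * t^j * aa c (n-1) j * aa c m j) := by
      funext j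
      have hd := aa_deriv c n j
      simp only [hf, Nat.succ_ne_zero, if_false, Nat.add_sub_cancel, Nat.factorial_succ]
      push_cast
      linear_combination (((Nat.factorial j : ℕ):ℂ) * t^(j+1) * aa c m j) * hd
    have h1 : HasSum (fun j => f (j+1)) (t*c*G c t n m + t*(n:ℂ)*G c t (n-1) m) := by
      rw [hshift]
      exact ((ih n).mul_left (t*c)).add ((ih (n-1)).mul_left (t*(n:ℂ)))
    have h2 : HasSum f (t*c*G c t n m + t*(n:ℂ)*G c t (n-1) m) := by
      have h2' := (hasSum_nat_add_iff 1).mp h1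
      simpa [hf] using h2'
    have h3 := h2.sub ((ih n).mul_left c)
    have hfun2 : (fun j => ((Nat.factorial j : ℕ):ℂ) * t^j * aa c n j * aa c (m+1) j)
        = fun j => f j - c * (((Nat.factorial j : ℕ):ℂ) * t^j * aa c n j * aa c m j) := by
      funext j
      rw [aa_ite, hf]
      ring
    rw [hfun2, show G c t n (m+1)
        = t*c*G c t n m + t*(n:ℂ)*G c t (n-1) m - c * G c t n m from G_rec c t n m]
    exact h3

lemma aa_closed (c : ℂ) : ∀ n j, aa c n j = ∑ r ∈ Finset.range (n+1),
    if r ≤ j then ((n.choose r : ℕ):ℂ) * (-c)^(n-r) * c^(j-r) / ((Nat.factorial (j-r) : ℕ):ℂ)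
    else 0 := by
  intro n
  induction n with
  | zero =>
    intro j
    simp [aa]
  | succ n ih =>
    intro j
    cases j with
    | zero =>
      rw [aa_zero]
      rw [Finset.sum_eq_single_of_mem 0 (Finset.mem_range.2 (by omega))
        (fun r _ hr => by rw [if_neg (by omega)])]
      simp
    | succ j' =>
      have hd : aa c (n+1) (j'+1) = aa c n j' - c * aa c n (j'+1) := rfl
      rw [hd, ih j', ih (j'+1)]
      rw [Finset.sum_range_succ' _ (n+1)]
      have e1 : ∀ r, (if r+1 ≤ j'+1 then (((n+1).choose (r+1) : ℕ):ℂ) * (-c)^(n+1-(r+1))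
            * c^(j'+1-(r+1)) / ((Nat.factorial (j'+1-(r+1)) : ℕ):ℂ) else 0)
          = (if r ≤ j' then ((n.choose r : ℕ):ℂ) * (-c)^(n-r) * c^(j'-r)
              / ((Nat.factorial (j'-r) : ℕ):ℂ) else 0)
          + (if r ≤ j' then ((n.choose (r+1) : ℕ):ℂ) * (-c)^(n-r) * c^(j'-r)
              / ((Nat.factorial (j'-r) : ℕ):ℂ) else 0) := by
        intro r
        by_cases hr : r ≤ j'
        · rw [if_pos (by omega), if_pos hr, if_pos hr, Nat.succ_sub_succ, Nat.succ_sub_succ,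
            Nat.choose_succ_succ n r]
          push_cast
          ring
        · rw [if_neg (by omega), if_neg hr, if_neg hr]
          simp
      rw [Finset.sum_congr rfl (fun r _ => e1 r), Finset.sum_add_distrib]
      have e2 : -(c * ∑ r ∈ Finset.range (n+1), (if r ≤ j'+1 then ((n.choose r : ℕ):ℂ)
            * (-c)^(n-r) * c^(j'+1-r) / ((Nat.factorial (j'+1-r) : ℕ):ℂ) else 0))
          = (∑ r ∈ Finset.range (n+1), if r ≤ j' then ((n.choose (r+1) : ℕ):ℂ) * (-c)^(n-r)
              * c^(j'-r) / ((Nat.factorial (j'-r) : ℕ):ℂ) else 0)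
          + (if 0 ≤ j'+1 then (((n+1).choose 0 : ℕ):ℂ) * (-c)^(n+1-0) * c^(j'+1-0)
              / ((Nat.factorial (j'+1-0) : ℕ):ℂ) else 0) := by
        rw [Finset.sum_range_succ'
          (fun r => if r ≤ j'+1 then ((n.choose r : ℕ):ℂ) * (-c)^(n-r) * c^(j'+1-r)
            / ((Nat.factorial (j'+1-r) : ℕ):ℂ) else 0) n]
        rw [Finset.sum_range_succ
          (fun r => if r ≤ j' then ((n.choose (r+1) : ℕ):ℂ) * (-c)^(n-r) * c^(j'-r)
            / ((Nat.factorial (j'-r) : ℕ):ℂ) else 0) n]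
        have hUn : (if n ≤ j' then ((n.choose (n+1) : ℕ):ℂ) * (-c)^(n-n) * c^(j'-n)
            / ((Nat.factorial (j'-n) : ℕ):ℂ) else 0) = 0 := by
          rw [Nat.choose_succ_self]
          simp
        rw [hUn, add_zero, mul_add, neg_add]
        congr 1
        · rw [Finset.mul_sum, ← Finset.sum_neg_distrib]
          refine Finset.sum_congr rfl ?_
          intro r hr
          have hrn : r < n := Finset.mem_range.1 hr
          by_cases hrj : r ≤ j'
          · rw [if_pos (by omega : r+1 ≤ j'+1), if_pos hrj, Nat.succ_sub_succ]
            have hpow : n - r = (n - (r+1)) + 1 := by omega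
            rw [hpow, pow_succ]
            ring
          · rw [if_neg (by omega), if_neg hrj]
            simp
        · rw [if_pos (by omega : (0:ℕ) ≤ j'+1), if_pos (by omega : (0:ℕ) ≤ j'+1)]
          simp only [Nat.sub_zero, Nat.choose_zero_right, Nat.cast_one, one_mul, pow_succ]
          ring
      linear_combination e2

lemma aa_eq_lag (b : ℝ) (m j : ℕ) :
    aa ((b:ℝ):ℂ) m j = ((((-1:ℝ))^(m - min m j)
      * ((Nat.factorial m : ℝ) / (Nat.factorial (max m j) : ℝ))
      * b^(max m j - min m j) * lag (min m j) (max m j - min m j) (b^2) : ℝ) : ℂ) := by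
  rw [aa_closed]
  rcases le_total m j with hmj | hjm
  · rw [min_eq_left hmj, max_eq_right hmj, Nat.sub_self, pow_zero, one_mul, lag,
      ← Finset.sum_range_reflect
        (fun i => ((m+(j-m)).choose (m-i) : ℝ) * (-(b^2))^i / (Nat.factorial i : ℝ)) (m+1)]
    rw [Finset.sum_congr rfl
      (fun r hr => if_pos (le_trans (Nat.lt_succ_iff.mp (Finset.mem_range.1 hr)) hmj :
        r ≤ j) : ∀ r ∈ Finset.range (m+1), _ = ((m.choose r : ℕ):ℂ) * (-(b:ℂ))^(m-r)
          * (b:ℂ)^(j-r) / ((Nat.factorial (j-r) : ℕ):ℂ))]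
    push_cast
    rw [Finset.mul_sum]
    refine Finset.sum_congr rfl fun r hr => ?_
    have hrm : r ≤ m := Nat.lt_succ_iff.mp (Finset.mem_range.1 hr)
    have h2 : m + (j - m) = j := by omega
    have h3 : m - (m - r) = r := by omega
    rw [h2, h3]
    have h4 : j - r = (j - m) + (m - r) := by omega
    rw [show (b:ℂ)^(j-r) = (b:ℂ)^(j-m) * (b:ℂ)^(m-r) from by rw [← pow_add, ← h4],
      show -((b:ℂ)^2) = (-(b:ℂ))*(b:ℂ) by ring, mul_pow]
    have hc1 : ((m.choose r : ℕ):ℂ) = (Nat.factorial m : ℂ)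
        / ((Nat.factorial r : ℂ) * (Nat.factorial (m-r) : ℂ)) := Nat.cast_choose ℂ hrm
    have hc2 : ((j.choose r : ℕ):ℂ) = (Nat.factorial j : ℂ)
        / ((Nat.factorial r : ℂ) * (Nat.factorial (j-r) : ℂ)) :=
      Nat.cast_choose ℂ (le_trans hrm hmj)
    rw [hc1, hc2]
    have f1 := fact_ne r
    have f2 := fact_ne (m-r)
    have f3 := fact_ne (j-r)
    have f4 := fact_ne j
    have f5 := fact_ne m
    field_simp
  · rw [min_eq_right hjm, max_eq_left hjm, lag,
      ← Finset.sum_range_reflect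
        (fun i => ((j+(m-j)).choose (j-i) : ℝ) * (-(b^2))^i / (Nat.factorial i : ℝ)) (j+1)]
    rw [← Finset.sum_subset (Finset.range_subset_range.2 (by omega : j + 1 ≤ m + 1))
      (fun r _ hr => if_neg (by
        simp only [Finset.mem_range, not_lt] at hr
        omega))]
    rw [Finset.sum_congr rfl
      (fun r hr => if_pos (Nat.lt_succ_iff.mp (Finset.mem_range.1 hr) :
        r ≤ j) : ∀ r ∈ Finset.range (j+1), _ = ((m.choose r : ℕ):ℂ) * (-(b:ℂ))^(m-r)
          * (b:ℂ)^(j-r) / ((Nat.factorial (j-r) : ℕ):ℂ))]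
    push_cast
    rw [Finset.mul_sum]
    refine Finset.sum_congr rfl fun r hr => ?_
    have hrj : r ≤ j := by
      have := Finset.mem_range.1 hr; omega
    have h2 : j + (m - j) = m := by omega
    have h3 : j - (j - r) = r := by omega
    rw [h2, h3]
    have h4 : m - r = (m - j) + (j - r) := by omega
    rw [h4, pow_add, show -((b:ℂ)^2) = (-(b:ℂ))*(b:ℂ) by ring, mul_pow, neg_pow]
    have f4 := fact_ne m
    field_simp

lemma pgen_eq_s6 (lam : ℝ) (hlam : 0 ≤ lam) (m j : ℕ) :
    (pgen lam m j : ℂ) = Complex.exp (-(lam:ℂ))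
      * (((Nat.factorial j : ℕ):ℂ) / ((Nat.factorial m : ℕ):ℂ))
      * (aa ((Real.sqrt lam : ℝ):ℂ) m j)^2 := by
  rw [aa_eq_lag, ← Complex.ofReal_pow]
  rw [show Complex.exp (-(lam:ℂ)) = ((Real.exp (-lam) : ℝ):ℂ) from by
    rw [Complex.ofReal_exp, Complex.ofReal_neg]]
  rw [show (((Nat.factorial j : ℕ):ℂ)) = ((( Nat.factorial j : ℝ)):ℂ) from by push_cast; rfl]
  rw [show (((Nat.factorial m : ℕ):ℂ)) = ((( Nat.factorial m : ℝ)):ℂ) from by push_cast; rfl]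
  rw [← Complex.ofReal_div, ← Complex.ofReal_mul, ← Complex.ofReal_mul]
  rw [Complex.ofReal_inj]
  -- now a real identity
  rw [Real.sq_sqrt hlam, pgen]
  have ha : (((-1:ℝ))^(m - min m j))^2 = 1 := by
    rw [← pow_mul, mul_comm, pow_mul]
    norm_num
  have hb : ((Real.sqrt lam)^(max m j - min m j))^2 = lam^(max m j - min m j) := by
    rw [← pow_mul, mul_comm, pow_mul, Real.sq_sqrt hlam]
  have h1 : (((-1:ℝ))^(m - min m j) * ((Nat.factorial m : ℝ) / (Nat.factorial (max m j) : ℝ))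
      * (Real.sqrt lam)^(max m j - min m j) * lag (min m j) (max m j - min m j) lam)^2
      = ((Nat.factorial m : ℝ) / (Nat.factorial (max m j) : ℝ))^2
        * lam^(max m j - min m j) * (lag (min m j) (max m j - min m j) lam)^2 := by
    rw [mul_pow, mul_pow, mul_pow, ha, hb]
    ring
  rw [h1]
  have hfac : ((Nat.factorial (min m j) : ℝ)) * ((Nat.factorial (max m j)) : ℝ)
      = ((Nat.factorial j : ℝ)) * ((Nat.factorial m) : ℝ) := by
    rcases le_total m j with h | h
    · rw [min_eq_left h, max_eq_right h, mul_comm]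
    · rw [min_eq_right h, max_eq_left h]
  have f1 : ((Nat.factorial (max m j)):ℝ) ≠ 0 := by
    exact_mod_cast Nat.factorial_ne_zero (max m j)
  have f2 : ((Nat.factorial m):ℝ) ≠ 0 := by
    exact_mod_cast Nat.factorial_ne_zero m
  field_simp
  linear_combination (lam^(max m j - min m j)
    * (lag (min m j) (max m j - min m j) lam)^2) * hfac

/-- The characteristic function of the generalized Poisson distribution
`𝒫(λ,m)` equals `exp(λ(e^{iu}-1)) e^{imu} L_m(2λ(1-cos u))`. -/
theorem pgen_charFun (lam : ℝ) (hlam : 0 < lam) (m : ℕ) (u : ℝ) :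
    ∑' j : ℕ, Complex.exp (Complex.I * j * u) * (pgen lam m j : ℂ) =
      Complex.exp (lam * (Complex.exp (Complex.I * u) - 1)) *
        Complex.exp (Complex.I * m * u) *
        (lag m 0 (2 * lam * (1 - Real.cos u)) : ℂ) := by
  set t : ℂ := Complex.exp (Complex.I * u) with ht
  set c : ℂ := ((Real.sqrt lam : ℝ) : ℂ) with hcdef
  have hc2 : c^2 = (lam : ℂ) := by
    rw [hcdef, ← Complex.ofReal_pow, Real.sq_sqrt hlam.le]
  have htj : ∀ j : ℕ, Complex.exp (Complex.I * j * u) = t ^ j := by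
    intro j
    rw [ht, ← Complex.exp_nat_mul]
    congr 1
    ring
  have hcos : t^2 + 1 = 2 * t * ((Real.cos u : ℝ):ℂ) := by
    rw [Complex.ofReal_cos, Complex.cos, ht]
    have e2 : Complex.exp (Complex.I*u) * Complex.exp ((u:ℂ)*Complex.I)
        = Complex.exp (Complex.I*u) ^ 2 := by
      rw [sq, ← Complex.exp_add, ← Complex.exp_add]
      congr 1
      ring
    have e3 : Complex.exp (Complex.I*u) * Complex.exp (-(u:ℂ)*Complex.I) = 1 := by
      rw [← Complex.exp_add, show Complex.I*(u:ℂ) + -(u:ℂ)*Complex.I = 0 by ring,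
        Complex.exp_zero]
    linear_combination -e2 - e3
  -- the tsum
  have hsum := (main_hasSum c t m m).mul_left
    (Complex.exp (-(lam:ℂ)) / ((Nat.factorial m : ℕ):ℂ))
  have hfun : (fun j => Complex.exp (-(lam:ℂ)) / ((Nat.factorial m : ℕ):ℂ)
      * (((Nat.factorial j : ℕ):ℂ) * t^j * aa c m j * aa c m j))
      = fun j : ℕ => Complex.exp (Complex.I * j * u) * (pgen lam m j : ℂ) := by
    funext j
    rw [pgen_eq_s6 lam hlam.le m j, htj j, ← hcdef, sq]
    ring
  have hsum2 : HasSum (fun j : ℕ => Complex.exp (Complex.I * j * u) * (pgen lam m j : ℂ))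
      (Complex.exp (-(lam:ℂ)) / ((Nat.factorial m : ℕ):ℂ) * G c t m m) := by
    rw [← hfun]
    exact hsum
  rw [hsum2.tsum_eq]
  -- now the closed form
  have hm := fact_ne m
  have key : gsum c t m m (m+1) = ((Nat.factorial m : ℕ):ℂ)
      * (t^m * ((lag m 0 (2 * lam * (1 - Real.cos u)) : ℝ):ℂ)) := by
    have hlag : ((lag m 0 (2 * lam * (1 - Real.cos u)) : ℝ):ℂ)
        = ∑ i ∈ Finset.range (m+1), (((m+0).choose (m-i) : ℕ):ℂ)
          * (-(2 * (lam:ℂ) * (1 - ((Real.cos u : ℝ):ℂ))))^i / ((Nat.factorial i : ℕ):ℂ) := by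
      rw [lag]
      push_cast
      rfl
    rw [hlag, ← Finset.sum_range_reflect
      (fun i => (((m+0).choose (m-i) : ℕ):ℂ)
        * (-(2 * (lam:ℂ) * (1 - ((Real.cos u : ℝ):ℂ))))^i / ((Nat.factorial i : ℕ):ℂ)) (m+1)]
    rw [gsum, Finset.mul_sum, Finset.mul_sum]
    refine Finset.sum_congr rfl fun k hk => ?_
    have hkm : k ≤ m := Nat.lt_succ_iff.mp (Finset.mem_range.1 hk)
    have h3 : m - (m - k) = k := by omega
    have h5 : m + 1 - 1 - k = m - k := by omega
    rw [h5, h3, Nat.add_zero]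
    have hpow : (c*(t-1))^((m-k)+(m-k)) = ((c*(t-1))^2)^(m-k) := by
      rw [← two_mul (m-k), pow_mul]
    have hxc : (c*(t-1))^2 = t * (-(2 * (lam:ℂ) * (1 - ((Real.cos u : ℝ):ℂ)))) := by
      rw [mul_pow, hc2]
      linear_combination (lam:ℂ) * hcos
    rw [hpow, hxc, mul_pow]
    have hcf : ((m.choose k * Nat.factorial k * Nat.factorial (m-k) : ℕ):ℂ)
        = ((Nat.factorial m : ℕ):ℂ) := by
      exact_mod_cast congrArg (fun x : ℕ => (x:ℂ))
        (Nat.choose_mul_factorial_mul_factorial hkm)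
    rw [show t^m = t^k * t^(m-k) from by rw [← pow_add]; congr 1; omega]
    have f6 := fact_ne (m-k)
    push_cast at hcf ⊢
    field_simp
    linear_combination (((m.choose k:ℕ):ℂ) * t^(m-k)
      * (-(2 * (lam:ℂ) * (1 - Complex.cos ((u:ℝ):ℂ))))^(m-k) * t^k) * hcf
  have hexp : Complex.exp (-(lam:ℂ)) * Complex.exp (t * (lam:ℂ))
      = Complex.exp ((lam:ℂ) * (t - 1)) := by
    rw [← Complex.exp_add]
    congr 1
    ring
  rw [G, min_self, hc2, key, htj m]
  field_simp
  rw [mul_comm t (lam:ℂ)] at hexp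
  linear_combination (t^m * ((lag m 0 (2 * lam * (1 - Real.cos u)) : ℝ):ℂ)) * hexp
end

section
/- The mean of the generalized Poisson distribution \mathcal{P}(\lambda, m) is \lambda + m, i.e. \sum_{j=0}^\infty j\, p_j(\lambda, m) = \lambda + m. -/
open scoped Nat

lemma lag_zero (α : ℕ) (x : ℝ) : lag 0 α x = 1 := by
  simp [lag]

/-- padded form -/
lemma lag_pad (n α M : ℕ) (h : n + 1 ≤ M) (x : ℝ) :
    lag n α x = ∑ i ∈ Finset.range M,
      (if i ≤ n then ((n + α).choose (n - i) : ℝ) else 0) * (-x) ^ i / (Nat.factorial i : ℝ) := by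
  rw [lag]
  rw [← Finset.sum_subset (Finset.range_subset_range.mpr h)]
  · apply Finset.sum_congr rfl
    intro i hi
    rw [Finset.mem_range] at hi
    rw [if_pos (by omega)]
  · intro i _ hi
    rw [Finset.mem_range] at hi
    rw [if_neg (by omega)]
    simp

/-- `L_{k+1}^{(α+1)} = L_{k+1}^{(α)} + L_k^{(α+1)}` -/
lemma lagA (k α : ℕ) (x : ℝ) :
    lag (k+1) (α+1) x = lag (k+1) α x + lag k (α+1) x := by
  rw [lag, lag, lag_pad k (α+1) (k+2) (by omega), ← Finset.sum_add_distrib]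
  apply Finset.sum_congr rfl
  intro i hi
  rw [Finset.mem_range] at hi
  rw [← add_div, ← add_mul]
  congr 1
  by_cases hik : i ≤ k
  · rw [if_pos hik]
    have h1 : k + 1 - i = (k - i) + 1 := by omega
    have h2 : k + 1 + (α + 1) = (k + 1 + α) + 1 := by omega
    rw [h1, h2, Nat.choose_succ_succ']
    have h3 : k + (α+1) = k + 1 + α := by omega
    rw [h3]
    push_cast
    ring
  · have hik1 : i = k + 1 := by omega
    rw [if_neg hik, hik1]
    simp
/-- `(n+1) L_{n+1}^{(α)} = (n+α+1) L_n^{(α)} - x L_n^{(α+1)}` -/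
lemma lagB (n α : ℕ) (x : ℝ) :
    (n+1 : ℝ) * lag (n+1) α x = (n+α+1 : ℝ) * lag n α x - x * lag n (α+1) x := by
  have hx : -x * lag n (α+1) x
      = ∑ i ∈ Finset.range (n+2), (i : ℝ) * ((n+1+α).choose (n+1-i) : ℝ) * (-x)^i / (Nat.factorial i : ℝ) := by
    rw [lag, Finset.mul_sum, Finset.sum_range_succ' (fun i => (i : ℝ) * ((n+1+α).choose (n+1-i) : ℝ) * (-x)^i / (Nat.factorial i : ℝ)) (n+1)]
    simp only [Nat.cast_zero, zero_mul, zero_div, add_zero, pow_zero, mul_one]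
    apply Finset.sum_congr rfl
    intro i hi
    rw [Finset.mem_range] at hi
    have h1 : n + 1 - (i + 1) = n - i := by omega
    have h2 : n + (α + 1) = n + 1 + α := by omega
    rw [h1, h2]
    rw [Nat.factorial_succ]
    have : (-x) * (-x)^i = (-x)^(i+1) := by ring
    push_cast
    field_simp
    ring
  have hgoal : (n+1 : ℝ) * lag (n+1) α x = (n+α+1 : ℝ) * lag n α x + (-x) * lag n (α+1) x := by
    rw [hx, lag, lag_pad n α (n+2) (by omega), Finset.mul_sum, Finset.mul_sum, ← Finset.sum_add_distrib]
    apply Finset.sum_congr rfl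
    intro i hi
    rw [Finset.mem_range] at hi
    by_cases hik : i ≤ n
    · rw [if_pos hik]
      -- (n+1) C(n+1+α, n+1-i) = (n+α+1) C(n+α, n-i) + i C(n+1+α, n+1-i)
      have key : (n + 1 - i) * ((n+1+α).choose (n+1-i)) = (n+α+1) * ((n+α).choose (n-i)) := by
        have h1 : n + 1 - i = (n - i) + 1 := by omega
        have h2 : n + 1 + α = (n + α) + 1 := by omega
        rw [h1, h2]
        have := Nat.add_one_mul_choose_eq (n + α) (n - i)
        rw [mul_comm]
        exact this.symm
      have keyR := congrArg (Nat.cast : ℕ → ℝ) key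
      push_cast [Nat.cast_sub (show i ≤ n + 1 by omega)] at keyR
      linear_combination ((-x)^i / (Nat.factorial i : ℝ)) * keyR
    · have hik1 : i = n + 1 := by omega
      rw [if_neg hik, hik1]
      push_cast
      ring
  rw [hgoal]; ring

noncomputable def gq (a : ℝ) : ℕ → ℕ → ℝ
  | j, 0 => a ^ j
  | j, (m+1) => j * gq a (j-1) m - a * gq a j m

lemma gq_zero (a : ℝ) (j : ℕ) : gq a j 0 = a ^ j := rfl
lemma gq_succ (a : ℝ) (j m : ℕ) : gq a j (m+1) = j * gq a (j-1) m - a * gq a j m := rfl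
lemma gq_succ' (a : ℝ) (j m : ℕ) : gq a (j+1) (m+1) = (j+1) * gq a j m - a * gq a (j+1) m := by
  rw [gq_succ]; simp
lemma gq_zero_succ (a : ℝ) (m : ℕ) : gq a 0 (m+1) = -a * gq a 0 m := by
  rw [gq_succ]; simp

lemma gq_rec2 (a : ℝ) (m : ℕ) : ∀ j : ℕ,
    gq a (j+1) (m+1) = (m+1) * gq a j m + a * gq a j (m+1) := by
  induction m with
  | zero =>
    intro j
    cases j with
    | zero =>
      rw [gq_succ' a 0 0, gq_zero_succ, gq_zero, gq_zero]; push_cast; ring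
    | succ j' =>
      rw [gq_succ' a (j'+1) 0, gq_succ' a j' 0, gq_zero, gq_zero, gq_zero]
      push_cast; ring
  | succ m ih =>
    intro j
    cases j with
    | zero =>
      have h1 := gq_zero_succ a (m+1)
      have h2 := gq_zero_succ a m
      have h3 := ih 0
      have d2 := gq_succ' a 0 (m+1)
      push_cast at *
      linear_combination d2 - a * h3 - a * h1 - ((m:ℝ)+1) * h2
    | succ j' =>
      have d1 := gq_succ' a (j'+1) (m+1)
      have d2 := gq_succ' a j' (m+1)
      have e3 := ih (j'+1)
      have e4 := ih j'
      have hd := gq_succ' a j' m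
      push_cast at *
      linear_combination d1 - a * d2 - a * e3 + ((j':ℝ)+1) * e4 - ((m:ℝ)+1) * hd

noncomputable def hq (a : ℝ) (j m : ℕ) : ℝ :=
  if j ≤ m then (-1)^(m-j) * (Nat.factorial j) * a^(m-j) * lag j (m-j) (a^2)
  else (Nat.factorial m) * a^(j-m) * lag m (j-m) (a^2)

lemma hq_le (a : ℝ) {j m : ℕ} (h : j ≤ m) :
    hq a j m = (-1)^(m-j) * (Nat.factorial j) * a^(m-j) * lag j (m-j) (a^2) := if_pos h

lemma hq_gt (a : ℝ) {j m : ℕ} (h : m < j) :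
    hq a j m = (Nat.factorial m) * a^(j-m) * lag m (j-m) (a^2) := if_neg (by omega)

lemma gq_eq_hq (a : ℝ) : ∀ m j : ℕ, gq a j m = hq a j m := by
  intro m
  induction m with
  | zero =>
    intro j
    rw [gq_zero]
    cases j with
    | zero => rw [hq_le a (le_refl 0)]; simp [lag_zero]
    | succ j' =>
      rw [hq_gt a (Nat.succ_pos j')]
      simp [lag_zero]
  | succ m ih =>
    intro j
    rw [gq_succ, ih, ih]
    rcases Nat.lt_or_ge j 1 with hj | hj
    · -- j = 0
      interval_cases j
      rw [hq_le a (Nat.zero_le m), hq_le a (Nat.zero_le (m+1))]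
      simp only [Nat.cast_zero, zero_mul, Nat.sub_zero, lag_zero]
      push_cast
      ring
    · rcases Nat.lt_or_ge m (j - 1) with hc | hc
      · -- j ≥ m + 2
        obtain ⟨d, rfl⟩ : ∃ d, j = m + 2 + d := ⟨j - m - 2, by omega⟩
        rw [hq_gt a (show m < m + 2 + d by omega), hq_gt a (show m < m + 2 + d - 1 by omega),
            hq_gt a (show m + 1 < m + 2 + d by omega)]
        have h1 : m + 2 + d - 1 - m = d + 1 := by omega
        have h2 : m + 2 + d - m = d + 2 := by omega
        have h3 : m + 2 + d - (m + 1) = d + 1 := by omega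
        rw [h1, h2, h3]
        have hB := lagB m (d+1) (a^2)
        simp only [show d+1+1 = d+2 from rfl] at hB
        push_cast at hB
        rw [Nat.factorial_succ]
        push_cast
        linear_combination (-(Nat.factorial m : ℝ) * a^(d+1)) * hB
      · rcases Nat.lt_or_ge m j with hm | hm
        · -- j = m + 1
          have hj1 : j = m + 1 := by omega
          subst hj1
          rw [hq_le a (show m + 1 - 1 ≤ m by omega), hq_le a (le_refl (m+1)),
              hq_gt a (show m < m + 1 by omega)]
          have h1 : m + 1 - 1 = m := by omega
          rw [h1]
          simp only [Nat.sub_self, pow_zero, one_mul, mul_one]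
          have hB := lagB m 0 (a^2)
          push_cast at hB ⊢
          have h2 : m + 1 - m = 1 := by omega
          rw [h2]
          rw [Nat.factorial_succ]
          push_cast
          nlinarith [hB]
        · -- 1 ≤ j ≤ m : j = k+1, m = k+1+d
          obtain ⟨k, rfl⟩ : ∃ k, j = k + 1 := ⟨j - 1, by omega⟩
          obtain ⟨d, rfl⟩ : ∃ d, m = k + 1 + d := ⟨m - k - 1, by omega⟩
          rw [hq_le a (show k + 1 - 1 ≤ k + 1 + d by omega),
              hq_le a (show k + 1 ≤ k + 1 + d by omega),
              hq_le a (show k + 1 ≤ k + 1 + d + 1 by omega)]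
          have h1 : k + 1 - 1 = k := by omega
          have h2 : k + 1 + d - k = d + 1 := by omega
          have h3 : k + 1 + d - (k + 1) = d := by omega
          have h4 : k + 1 + d + 1 - (k + 1) = d + 1 := by omega
          rw [h1, h2, h3, h4]
          have hA := lagA k d (a^2)
          rw [Nat.factorial_succ]
          push_cast
          calc ((k:ℝ)+1) * ((-1)^(d+1) * ↑k ! * a^(d+1) * lag k (d+1) (a^2)) -
                a * ((-1)^d * (((k:ℝ)+1) * ↑k !) * a^d * lag (k+1) d (a^2))
              = (-1)^(d+1) * (((k:ℝ)+1) * ↑k !) * a^(d+1) *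
                  (lag k (d+1) (a^2) + lag (k+1) d (a^2)) := by ring
            _ = (-1)^(d+1) * (((k:ℝ)+1) * ↑k !) * a^(d+1) * lag (k+1) (d+1) (a^2) := by
                rw [hA]; ring

lemma gq_bound (a : ℝ) : ∀ m j : ℕ, |gq a j m| ≤
    (Nat.factorial (m+1) : ℝ) * (j+1:ℝ)^m * (max |a| 1)^(j+m) := by
  set A := max |a| 1 with hA
  have hA1 : (1:ℝ) ≤ A := le_max_right _ _
  have hAa : |a| ≤ A := le_max_left _ _
  have hA0 : (0:ℝ) ≤ A := le_trans zero_le_one hA1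
  intro m
  induction m with
  | zero =>
    intro j
    rw [gq_zero, abs_pow]
    simpa using pow_le_pow_left₀ (abs_nonneg a) hAa j
  | succ m ih =>
    intro j
    rw [gq_succ]
    have habs : |(j:ℝ) * gq a (j-1) m - a * gq a j m| ≤
        (j:ℝ) * |gq a (j-1) m| + |a| * |gq a j m| := by
      calc |(j:ℝ) * gq a (j-1) m - a * gq a j m|
          ≤ |(j:ℝ) * gq a (j-1) m| + |a * gq a j m| := abs_sub _ _
        _ = (j:ℝ) * |gq a (j-1) m| + |a| * |gq a j m| := by
            rw [abs_mul, abs_mul, abs_of_nonneg (Nat.cast_nonneg j)]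
    refine le_trans habs ?_
    cases j with
    | zero =>
      simp only [Nat.cast_zero, zero_mul, zero_add]
      have i0 := ih 0
      push_cast at i0
      norm_num at i0
      have h1 : (Nat.factorial (m+1) : ℝ) ≤ (Nat.factorial (m+2) : ℝ) := by
        exact_mod_cast Nat.factorial_le (by omega)
      have i0' : |gq a 0 m| ≤ (Nat.factorial (m+1) : ℝ) * A ^ m := by
        refine le_trans i0 (le_of_eq ?_); ring
      have step1 : |a| * |gq a 0 m| ≤ A * ((Nat.factorial (m+1) : ℝ) * A ^ m) :=
        mul_le_mul hAa i0' (abs_nonneg _) hA0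
      refine le_trans step1 ?_
      have hfe : (Nat.factorial (m+1+1) : ℝ) = ((m:ℝ)+2) * (Nat.factorial (m+1) : ℝ) := by
        rw [show m+1+1 = m+2 from rfl, Nat.factorial_succ]; push_cast; ring
      norm_num [hfe, pow_succ]
      nlinarith [mul_nonneg (mul_nonneg (Nat.cast_nonneg (Nat.factorial (m+1)) : (0:ℝ) ≤ _) (pow_nonneg hA0 m)) hA0,
        Nat.cast_nonneg (α := ℝ) m]
    | succ k =>
      have ik := ih k
      have ik1 := ih (k+1)
      push_cast at ik ik1
      have h1 : ((k:ℝ)+1) * |gq a k m| ≤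
          (Nat.factorial (m+1) : ℝ) * ((k:ℝ)+1)^(m+1) * A^(k+m) := by
        calc ((k:ℝ)+1) * |gq a k m| ≤ ((k:ℝ)+1) * ((Nat.factorial (m+1) : ℝ) * ((k:ℝ)+1:ℝ)^m * A^(k+m)) := by
              apply mul_le_mul_of_nonneg_left ik (by positivity)
          _ = (Nat.factorial (m+1) : ℝ) * ((k:ℝ)+1:ℝ)^(m+1) * A^(k+m) := by ring
      have h2 : |a| * |gq a (k+1) m| ≤
          (Nat.factorial (m+1) : ℝ) * ((k:ℝ)+2)^m * A^(k+1+m+1) := by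
        calc |a| * |gq a (k+1) m| ≤ A * ((Nat.factorial (m+1) : ℝ) * ((k:ℝ)+1+1)^m * A^(k+1+m)) := by
              apply mul_le_mul hAa ik1 (abs_nonneg _) hA0
          _ = (Nat.factorial (m+1) : ℝ) * ((k:ℝ)+2)^m * A^(k+1+m+1) := by
              rw [pow_succ]; ring_nf
      have h3 : (Nat.factorial (m+1) : ℝ) * ((k:ℝ)+1)^(m+1) * A^(k+m) ≤
          (Nat.factorial (m+1) : ℝ) * ((k:ℝ)+2)^(m+1) * A^(k+1+m+1) := by
        apply mul_le_mul
        · apply mul_le_mul_of_nonneg_left _ (by positivity)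
          apply pow_le_pow_left₀ (by positivity)
          linarith
        · apply pow_le_pow_right₀ hA1; omega
        · positivity
        · positivity
      have h4 : (Nat.factorial (m+1) : ℝ) * ((k:ℝ)+2)^m * A^(k+1+m+1) ≤
          (Nat.factorial (m+1) : ℝ) * ((k:ℝ)+2)^(m+1) * A^(k+1+m+1) := by
        apply mul_le_mul_of_nonneg_right _ (by positivity)
        apply mul_le_mul_of_nonneg_left _ (by positivity)
        apply pow_le_pow_right₀ (by linarith) (by omega)
      have h5 : (2:ℝ) * ((Nat.factorial (m+1) : ℝ) * ((k:ℝ)+2)^(m+1) * A^(k+1+m+1)) ≤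
          (Nat.factorial (m+2) : ℝ) * ((k:ℝ)+2)^(m+1) * A^(k+1+m+1) := by
        have hf : (Nat.factorial (m+2) : ℝ) = ((m:ℝ)+2) * (Nat.factorial (m+1) : ℝ) := by
          rw [Nat.factorial_succ]; push_cast; ring
        rw [hf]
        nlinarith [mul_nonneg (mul_nonneg (Nat.cast_nonneg (Nat.factorial (m+1)) : (0:ℝ) ≤ _)
          (pow_nonneg (show (0:ℝ) ≤ (k:ℝ)+2 by positivity) (m+1))) (pow_nonneg hA0 (k+1+m+1)),
          Nat.cast_nonneg (α := ℝ) m]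
      have hfe : (Nat.factorial (m+1+1) : ℝ) = (Nat.factorial (m+2) : ℝ) := rfl
      have hee : (k+1)+(m+1) = k+1+m+1 := by omega
      push_cast
      rw [hee, hfe, show (k:ℝ)+1+1 = (k:ℝ)+2 from by ring]
      have c1 := le_trans h1 h3
      have c2 := le_trans h2 h4
      linarith [h5, c1, c2]

lemma summable_poly (d : ℕ) (x : ℝ) (hx : 0 ≤ x) :
    Summable (fun k : ℕ => ((k:ℝ)+1)^d * x^k / (Nat.factorial k : ℝ)) := by
  refine Summable.of_nonneg_of_le (fun k => by positivity) (fun k => ?_)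
    (Real.summable_pow_div_factorial ((2:ℝ)^d * x))
  have hk : ((k:ℝ)+1) ≤ (2:ℝ)^k := by
    exact_mod_cast Nat.succ_le_of_lt (Nat.lt_two_pow_self)
  have h2 : ((k:ℝ)+1)^d ≤ ((2:ℝ)^k)^d := pow_le_pow_left₀ (by positivity) hk d
  have h3 : ((2:ℝ)^k)^d * x^k = ((2:ℝ)^d * x)^k := by
    rw [mul_pow, ← pow_mul, ← pow_mul, mul_comm d k]
  calc ((k:ℝ)+1)^d * x^k / (Nat.factorial k : ℝ)
      ≤ ((2:ℝ)^k)^d * x^k / (Nat.factorial k : ℝ) := by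
        gcongr
    _ = ((2:ℝ)^d * x)^k / (Nat.factorial k : ℝ) := by rw [h3]

lemma summable_gg (a : ℝ) (m m' s t : ℕ) :
    Summable (fun k : ℕ => gq a (k+s) m * gq a (k+t) m' / (Nat.factorial k : ℝ)) := by
  set A := max |a| 1 with hA
  have hA1 : (1:ℝ) ≤ A := le_max_right _ _
  have hA0 : (0:ℝ) < A := lt_of_lt_of_le zero_lt_one hA1
  refine Summable.of_norm ?_
  refine Summable.of_nonneg_of_le (fun k => norm_nonneg _) (fun k => ?_)
    (((summable_poly (m+m') (A^2) (by positivity)).mul_left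
      ((Nat.factorial (m+1) : ℝ) * (Nat.factorial (m'+1) : ℝ) *
        ((s:ℝ)+1)^m * ((t:ℝ)+1)^(m') * A^(s+t+m+m'))))
  have hb1 : |gq a (k+s) m| ≤ (Nat.factorial (m+1) : ℝ) * (((s:ℝ)+1)*((k:ℝ)+1))^m * A^(k+s+m) := by
    refine le_trans (gq_bound a m (k+s)) ?_
    have hkk : ((k+s:ℕ):ℝ)+1 ≤ ((s:ℝ)+1)*((k:ℝ)+1) := by
      push_cast; nlinarith [mul_nonneg (Nat.cast_nonneg (α := ℝ) s) (Nat.cast_nonneg (α := ℝ) k)]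
    exact mul_le_mul_of_nonneg_right (mul_le_mul_of_nonneg_left
      (pow_le_pow_left₀ (by positivity) hkk m) (by positivity)) (by positivity)
  have hb2 : |gq a (k+t) m'| ≤ (Nat.factorial (m'+1) : ℝ) * (((t:ℝ)+1)*((k:ℝ)+1))^(m') * A^(k+t+m') := by
    refine le_trans (gq_bound a m' (k+t)) ?_
    have hkk : ((k+t:ℕ):ℝ)+1 ≤ ((t:ℝ)+1)*((k:ℝ)+1) := by
      push_cast; nlinarith [mul_nonneg (Nat.cast_nonneg (α := ℝ) t) (Nat.cast_nonneg (α := ℝ) k)]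
    exact mul_le_mul_of_nonneg_right (mul_le_mul_of_nonneg_left
      (pow_le_pow_left₀ (by positivity) hkk m') (by positivity)) (by positivity)
  rw [Real.norm_eq_abs, abs_div, abs_mul, abs_of_nonneg (by positivity : (0:ℝ) ≤ (Nat.factorial k : ℝ))]
  calc |gq a (k+s) m| * |gq a (k+t) m'| / (Nat.factorial k : ℝ)
      ≤ ((Nat.factorial (m+1) : ℝ) * (((s:ℝ)+1)*((k:ℝ)+1))^m * A^(k+s+m)) *
        ((Nat.factorial (m'+1) : ℝ) * (((t:ℝ)+1)*((k:ℝ)+1))^(m') * A^(k+t+m')) /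
          (Nat.factorial k : ℝ) := by
        gcongr
    _ = (Nat.factorial (m+1) : ℝ) * (Nat.factorial (m'+1) : ℝ) *
        ((s:ℝ)+1)^m * ((t:ℝ)+1)^(m') * A^(s+t+m+m') *
        (((k:ℝ)+1)^(m+m') * (A^2)^k / (Nat.factorial k : ℝ)) := by
        rw [mul_pow, mul_pow (((t:ℝ)+1))]
        ring

lemma tsum_exp (x : ℝ) : ∑' k : ℕ, x^k / (Nat.factorial k : ℝ) = Real.exp x := by
  rw [Real.exp_eq_exp_ℝ, NormedSpace.exp_eq_tsum_div]

lemma sumB (a : ℝ) (m m' : ℕ) :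
    Summable (fun k : ℕ => gq a k m * gq a k m' / (Nat.factorial k : ℝ)) := by
  simpa using summable_gg a m m' 0 0

lemma sumC (a : ℝ) (m m' : ℕ) :
    Summable (fun k : ℕ => gq a k m * gq a (k+1) m' / (Nat.factorial k : ℝ)) := by
  simpa using summable_gg a m m' 0 1

lemma sumD (a : ℝ) (m m' : ℕ) :
    Summable (fun k : ℕ => gq a (k+1) m * gq a (k+1) m' / (Nat.factorial k : ℝ)) := by
  simpa using summable_gg a m m' 1 1

lemma B_step (a : ℝ) (m m' : ℕ) :
    ∑' k : ℕ, gq a k (m+1) * gq a k m' / (Nat.factorial k : ℝ)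
      = (∑' k : ℕ, gq a k m * gq a (k+1) m' / (Nat.factorial k : ℝ))
        - a * ∑' k : ℕ, gq a k m * gq a k m' / (Nat.factorial k : ℝ) := by
  set f := fun k : ℕ => gq a k (m+1) * gq a k m' / (Nat.factorial k : ℝ) with hf
  set b := fun k : ℕ => gq a k m * gq a k m' / (Nat.factorial k : ℝ) with hb
  set c := fun k : ℕ => gq a k m * gq a (k+1) m' / (Nat.factorial k : ℝ) with hc
  have hshift : ∀ k : ℕ, f (k+1) = c k - a * b (k+1) := by
    intro k
    simp only [hf, hb, hc, gq_succ' a k m]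
    have hfac : (Nat.factorial (k+1) : ℝ) = ((k:ℝ)+1) * (Nat.factorial k : ℝ) := by
      rw [Nat.factorial_succ]; push_cast; ring
    rw [hfac]
    have hk : (Nat.factorial k : ℝ) ≠ 0 := by positivity
    have hk1 : ((k:ℝ)+1) ≠ 0 := by positivity
    field_simp
  have hsb : Summable b := sumB a m m'
  have hsb1 : Summable (fun k => b (k+1)) := by
    exact (summable_nat_add_iff 1).mpr hsb
  have hsc : Summable c := sumC a m m'
  rw [Summable.tsum_eq_zero_add (sumB a (m+1) m')]
  have h1 : ∑' k : ℕ, f (k+1) = (∑' k : ℕ, c k) - a * ∑' k : ℕ, b (k+1) := by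
    rw [← tsum_mul_left]
    rw [← Summable.tsum_sub hsc (hsb1.mul_left a)]
    exact tsum_congr (fun k => by rw [hshift k])
  have h2 : ∑' k : ℕ, b (k+1) = (∑' k : ℕ, b k) - b 0 := by
    rw [Summable.tsum_eq_zero_add hsb]; ring
  have h3 : f 0 = -a * b 0 := by
    simp only [hf, hb, gq_succ a 0 m]
    norm_num
    ring
  rw [h1, h2, (show gq a 0 (m+1) * gq a 0 m' / (Nat.factorial 0 : ℝ) = -a * b 0 from h3)]
  ring

lemma C_step0 (a : ℝ) (m : ℕ) :
    ∑' k : ℕ, gq a k m * gq a (k+1) 0 / (Nat.factorial k : ℝ)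
      = a * ∑' k : ℕ, gq a k m * gq a k 0 / (Nat.factorial k : ℝ) := by
  rw [← tsum_mul_left]
  apply tsum_congr
  intro k
  rw [gq_zero, gq_zero, pow_succ]
  ring

lemma C_step (a : ℝ) (m m' : ℕ) :
    ∑' k : ℕ, gq a k m * gq a (k+1) (m'+1) / (Nat.factorial k : ℝ)
      = ((m':ℝ)+1) * (∑' k : ℕ, gq a k m * gq a k m' / (Nat.factorial k : ℝ))
        + a * ∑' k : ℕ, gq a k m * gq a k (m'+1) / (Nat.factorial k : ℝ) := by
  rw [← tsum_mul_left, ← tsum_mul_left,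
    ← Summable.tsum_add ((sumB a m m').mul_left _) ((sumB a m (m'+1)).mul_left a)]
  apply tsum_congr
  intro k
  rw [gq_rec2 a m' k]
  push_cast
  ring

lemma B_eq (a : ℝ) : ∀ m m' : ℕ,
    ∑' k : ℕ, gq a k m * gq a k m' / (Nat.factorial k : ℝ)
      = if m = m' then (Nat.factorial m : ℝ) * Real.exp (a^2) else 0 := by
  intro m
  induction m with
  | zero =>
    intro m'
    cases m' with
    | zero =>
      rw [if_pos rfl]
      have : ∀ k : ℕ, gq a k 0 * gq a k 0 / (Nat.factorial k : ℝ)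
          = (a^2)^k / (Nat.factorial k : ℝ) := by
        intro k; rw [gq_zero, ← pow_add, ← two_mul, pow_mul]
      rw [tsum_congr this, tsum_exp]
      norm_num
    | succ m'' =>
      rw [if_neg (by omega)]
      have hcomm : ∑' k : ℕ, gq a k 0 * gq a k (m''+1) / (Nat.factorial k : ℝ)
          = ∑' k : ℕ, gq a k (m''+1) * gq a k 0 / (Nat.factorial k : ℝ) :=
        tsum_congr (fun k => by ring_nf)
      rw [hcomm, B_step a m'' 0, C_step0 a m'']
      ring
  | succ m ih =>
    intro m'
    rw [B_step a m m']
    cases m' with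
    | zero =>
      rw [if_neg (by omega), C_step0 a m]
      ring
    | succ m'' =>
      rw [C_step a m m'', ih m'']
      by_cases hmm : m = m''
      · subst hmm
        rw [if_pos rfl, if_pos rfl]
        rw [Nat.factorial_succ]
        push_cast
        ring
      · rw [if_neg hmm, if_neg (by omega)]
        ring

lemma D_eq (a : ℝ) (m : ℕ) :
    ∑' k : ℕ, (gq a (k+1) m)^2 / (Nat.factorial k : ℝ)
      = (Nat.factorial m : ℝ) * (a^2 + m) * Real.exp (a^2) := by
  cases m with
  | zero =>
    have : ∀ k : ℕ, (gq a (k+1) 0)^2 / (Nat.factorial k : ℝ)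
        = a^2 * ((a^2)^k / (Nat.factorial k : ℝ)) := by
      intro k
      rw [gq_zero, ← pow_mul, mul_comm (k+1) 2, pow_mul, pow_succ]
      ring
    rw [tsum_congr this, tsum_mul_left, tsum_exp]
    norm_num
  | succ m =>
    have hterm : ∀ k : ℕ, (gq a (k+1) (m+1))^2 / (Nat.factorial k : ℝ)
        = ((m:ℝ)+1)^2 * (gq a k m * gq a k m / (Nat.factorial k : ℝ))
          + (2*a*((m:ℝ)+1)) * (gq a k m * gq a k (m+1) / (Nat.factorial k : ℝ))
          + a^2 * (gq a k (m+1) * gq a k (m+1) / (Nat.factorial k : ℝ)) := by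
      intro k
      rw [gq_rec2 a m k]
      push_cast
      field_simp
      ring
    rw [tsum_congr hterm]
    rw [Summable.tsum_add (Summable.add ((sumB a m m).mul_left _) ((sumB a m (m+1)).mul_left _))
      ((sumB a (m+1) (m+1)).mul_left _),
      Summable.tsum_add ((sumB a m m).mul_left _) ((sumB a m (m+1)).mul_left _),
      tsum_mul_left, tsum_mul_left, tsum_mul_left,
      B_eq a m m, B_eq a m (m+1), B_eq a (m+1) (m+1)]
    rw [if_pos rfl, if_pos rfl, if_neg (by omega)]
    rw [Nat.factorial_succ]
    push_cast
    ring


/-- The mean of the generalized Poisson distribution `𝒫(λ,m)` is `λ + m`. -/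
theorem pgen_mean (lam : ℝ) (hlam : 0 < lam) (m : ℕ) :
    ∑' j : ℕ, (j : ℝ) * pgen lam m j = lam + m := by
  set a := Real.sqrt lam with ha
  have ha2 : a^2 = lam := Real.sq_sqrt hlam.le
  have hm0 : (Nat.factorial m : ℝ) ≠ 0 := by positivity
  have hpg : ∀ j : ℕ, pgen lam m j = Real.exp (-lam) * (gq a j m)^2 /
      ((Nat.factorial j : ℝ) * (Nat.factorial m : ℝ)) := by
    intro j
    have hj0 : (Nat.factorial j : ℝ) ≠ 0 := by positivity
    rw [gq_eq_hq]
    rcases le_or_gt j m with h | h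
    · rw [hq_le a h, pgen, min_eq_right h, max_eq_left h]
      have h1 : ((-1:ℝ)^(m-j))^2 = 1 := by
        rw [← pow_mul, mul_comm (m-j) 2, pow_mul]; norm_num
      have h2 : (a^(m-j))^2 = lam^(m-j) := by
        rw [← pow_mul, mul_comm (m-j) 2, pow_mul, ha2]
      rw [mul_pow, mul_pow, mul_pow, h1, h2, ha2]
      field_simp
    · rw [hq_gt a h, pgen, min_eq_left h.le, max_eq_right h.le]
      have h2 : (a^(j-m))^2 = lam^(j-m) := by
        rw [← pow_mul, mul_comm (j-m) 2, pow_mul, ha2]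
      rw [mul_pow, mul_pow, h2, ha2]
      field_simp
  have hterm : ∀ j : ℕ, (j:ℝ) * pgen lam m j
      = (Real.exp (-lam) / (Nat.factorial m : ℝ)) *
        ((j:ℝ) * (gq a j m)^2 / (Nat.factorial j : ℝ)) := by
    intro j
    rw [hpg j]
    have hj0 : (Nat.factorial j : ℝ) ≠ 0 := by positivity
    field_simp
  rw [tsum_congr hterm, tsum_mul_left]
  set F := fun j : ℕ => (j:ℝ) * (gq a j m)^2 / (Nat.factorial j : ℝ) with hF
  have hFs : ∀ k : ℕ, F (k+1) = (gq a (k+1) m)^2 / (Nat.factorial k : ℝ) := by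
    intro k
    simp only [hF]
    have hk : (Nat.factorial k : ℝ) ≠ 0 := by positivity
    rw [Nat.factorial_succ]
    push_cast
    field_simp
  have hsD : Summable (fun k : ℕ => (gq a (k+1) m)^2 / (Nat.factorial k : ℝ)) := by
    refine (sumD a m m).congr (fun k => ?_)
    rw [sq]
  have hFsum : Summable F := by
    apply (summable_nat_add_iff 1).mp
    exact hsD.congr (fun k => (hFs k).symm)
  rw [Summable.tsum_eq_zero_add hFsum]
  have hF0 : F 0 = 0 := by simp [hF]
  rw [hF0, tsum_congr hFs, D_eq a m, ha2, zero_add]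
  have hee : Real.exp (-lam) * Real.exp lam = 1 := by rw [← Real.exp_add]; simp
  have hres : Real.exp (-lam) / (Nat.factorial m : ℝ) *
      ((Nat.factorial m : ℝ) * (lam + (m:ℝ)) * Real.exp lam)
      = (lam + (m:ℝ)) * (Real.exp (-lam) * Real.exp lam) := by
    field_simp
  rw [hres, hee, mul_one]
end

section
/- A random variable with characteristic function that vanishes at some real point is not infinitely divisible. Consequently, if \lambda \geq x_k^{(m)}/4 for some root x_k^{(m)} of L_m, the generalized Poisson distribution \mathcal{P}(\lambda, m) is not infinitely divisible. -/
open MeasureTheory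

/-- Convolution of two measures on `ℝ`. -/
noncomputable def mconv (μ ν : Measure ℝ) : Measure ℝ :=
  (μ.prod ν).map (fun p => p.1 + p.2)

/-- `n`-fold convolution power of a measure on `ℝ`. -/
noncomputable def mconvPow (ν : Measure ℝ) : ℕ → Measure ℝ
  | 0 => Measure.dirac 0
  | n + 1 => mconv (mconvPow ν n) ν

/-- A probability measure is infinitely divisible if for every `n ≥ 1` it is
the `n`-fold convolution of some probability measure. -/
def InfDivisible (μ : Measure ℝ) : Prop :=
  ∀ n : ℕ, 0 < n → ∃ ν : Measure ℝ, IsProbabilityMeasure ν ∧ μ = mconvPow ν n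

/-- The characteristic function of a measure on `ℝ`. -/
noncomputable def charF (μ : Measure ℝ) (t : ℝ) : ℂ :=
  ∫ x, Complex.exp (Complex.I * t * x) ∂μ

/-! ### Auxiliary lemmas -/

lemma norm_cexp_I_mul (t x : ℝ) : ‖Complex.exp (Complex.I * t * x)‖ = 1 := by
  rw [show Complex.I * t * x = ((t*x : ℝ) : ℂ) * Complex.I by
    push_cast; ring]
  exact Complex.norm_exp_ofReal_mul_I _

lemma integrable_bdd {α : Type*} [MeasurableSpace α] [TopologicalSpace α]
    [OpensMeasurableSpace α] [SecondCountableTopology α]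
    (μ : Measure α) [IsFiniteMeasure μ]
    {E : Type*} [NormedAddCommGroup E] {f : α → E} (hf : Continuous f)
    (C : ℝ) (h : ∀ x, ‖f x‖ ≤ C) : Integrable f μ :=
  (integrable_const C).mono' hf.aestronglyMeasurable (ae_of_all _ h)

lemma charF_zero_eq_one (μ : Measure ℝ) [IsProbabilityMeasure μ] : charF μ 0 = 1 := by
  simp [charF]

lemma continuous_charF (μ : Measure ℝ) [IsProbabilityMeasure μ] :
    Continuous (charF μ) := by
  apply continuous_of_dominated (bound := fun _ => (1:ℝ))
  · exact fun t => (Continuous.aestronglyMeasurable (by continuity))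
  · exact fun t => ae_of_all _ fun x => (norm_cexp_I_mul t x).le
  · exact integrable_const 1
  · exact ae_of_all _ fun x => by continuity

instance mconv_prob (μ ν : Measure ℝ) [IsProbabilityMeasure μ] [IsProbabilityMeasure ν] :
    IsProbabilityMeasure (mconv μ ν) :=
  Measure.isProbabilityMeasure_map (measurable_fst.add measurable_snd).aemeasurable

instance mconvPow_prob (ν : Measure ℝ) [IsProbabilityMeasure ν] (n : ℕ) :
    IsProbabilityMeasure (mconvPow ν n) := by
  induction n with
  | zero => exact Measure.dirac.isProbabilityMeasure
  | succ n ih => exact mconv_prob _ _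

lemma charF_conv (μ ν : Measure ℝ) [IsProbabilityMeasure μ] [IsProbabilityMeasure ν] (t : ℝ) :
    charF (mconv μ ν) t = charF μ t * charF ν t := by
  rw [charF, mconv, integral_map (by fun_prop :
    Measurable fun p : ℝ × ℝ => p.1 + p.2).aemeasurable
    (Continuous.aestronglyMeasurable (by continuity))]
  have h : ∀ p : ℝ × ℝ, Complex.exp (Complex.I * t * (p.1 + p.2 : ℝ)) =
      Complex.exp (Complex.I * t * p.1) * Complex.exp (Complex.I * t * p.2) := by
    intro p; rw [← Complex.exp_add]; push_cast; ring_nf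
  simp_rw [h]
  rw [integral_prod_mul (fun x : ℝ => Complex.exp (Complex.I * t * x))
    (fun x : ℝ => Complex.exp (Complex.I * t * x))]
  rfl

lemma charF_pow (ν : Measure ℝ) [IsProbabilityMeasure ν] (n : ℕ) (t : ℝ) :
    charF (mconvPow ν n) t = (charF ν t) ^ n := by
  induction n with
  | zero => simp [mconvPow, charF]
  | succ n ih => rw [mconvPow, charF_conv, ih, pow_succ]

lemma normSq_charF (ν : Measure ℝ) [IsProbabilityMeasure ν] (t : ℝ) :
    (Complex.normSq (charF ν t) : ℝ) =
      ∫ p : ℝ × ℝ, Real.cos (t * (p.1 - p.2)) ∂(ν.prod ν) := by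
  have h1 : (Complex.normSq (charF ν t) : ℂ) = charF ν t * (starRingEnd ℂ) (charF ν t) :=
    (Complex.mul_conj _).symm
  have h2 : (starRingEnd ℂ) (charF ν t) =
      ∫ y : ℝ, Complex.exp (Complex.I * (-t) * y) ∂ν := by
    rw [charF, ← integral_conj]
    congr 1; funext y
    rw [← Complex.exp_conj]
    congr 1
    simp [Complex.conj_I]
  have h3 : charF ν t * (starRingEnd ℂ) (charF ν t) =
      ∫ p : ℝ × ℝ, Complex.exp (Complex.I * t * p.1) *
        Complex.exp (Complex.I * (-t) * p.2) ∂(ν.prod ν) := by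
    rw [h2, charF,
      integral_prod_mul (fun x : ℝ => Complex.exp (Complex.I * t * x))
        (fun y : ℝ => Complex.exp (Complex.I * (-t) * y))]
  have h4 : ∀ p : ℝ × ℝ, Complex.exp (Complex.I * t * p.1) *
      Complex.exp (Complex.I * (-t) * p.2) =
      Complex.exp (((t * (p.1 - p.2) : ℝ) : ℂ) * Complex.I) := by
    intro p; rw [← Complex.exp_add]; congr 1; push_cast; ring
  have hint : Integrable (fun p : ℝ × ℝ =>
      Complex.exp (((t * (p.1 - p.2) : ℝ) : ℂ) * Complex.I)) (ν.prod ν) := by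
    apply integrable_bdd _ (by continuity) 1
    intro p
    rw [Complex.norm_exp_ofReal_mul_I]
  calc (Complex.normSq (charF ν t) : ℝ)
      = ((Complex.normSq (charF ν t) : ℂ)).re := by simp
    _ = (∫ p : ℝ × ℝ, Complex.exp (((t * (p.1 - p.2) : ℝ) : ℂ) * Complex.I) ∂(ν.prod ν)).re := by
        rw [h1, h3, integral_congr_ae (ae_of_all _ h4)]
    _ = ∫ p : ℝ × ℝ, (Complex.exp (((t * (p.1 - p.2) : ℝ) : ℂ) * Complex.I)).re ∂(ν.prod ν) :=
        (integral_re hint).symm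
    _ = ∫ p : ℝ × ℝ, Real.cos (t * (p.1 - p.2)) ∂(ν.prod ν) := by
        simp_rw [Complex.exp_ofReal_mul_I_re]

lemma integrable_cos_aux (ν : Measure ℝ) [IsProbabilityMeasure ν] (t : ℝ) :
    Integrable (fun p : ℝ × ℝ => Real.cos (t * (p.1 - p.2))) (ν.prod ν) := by
  apply (integrable_const (1:ℝ)).mono' (Continuous.aestronglyMeasurable (by continuity))
  exact ae_of_all _ fun p => by
    rw [Real.norm_eq_abs]; exact Real.abs_cos_le_one _

lemma cos_double_ineq (a : ℝ) : 1 - Real.cos (2 * a) ≤ 4 * (1 - Real.cos a) := by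
  have h1 := Real.cos_sq_le_one a
  have h2 := Real.cos_le_one a
  have h3 := Real.cos_two_mul a
  nlinarith

/-- The basic inequality `1 - |φ(2t)|² ≤ 4 (1 - |φ(t)|²)`. -/
lemma charF_double_ineq (ν : Measure ℝ) [IsProbabilityMeasure ν] (t : ℝ) :
    1 - Complex.normSq (charF ν (2 * t)) ≤ 4 * (1 - Complex.normSq (charF ν t)) := by
  rw [normSq_charF, normSq_charF]
  have h1 : (1 : ℝ) = ∫ _p : ℝ × ℝ, (1:ℝ) ∂(ν.prod ν) := by simp
  have hmono : ∫ p : ℝ × ℝ, (1 - Real.cos ((2*t) * (p.1 - p.2))) ∂(ν.prod ν) ≤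
      ∫ p : ℝ × ℝ, 4 * (1 - Real.cos (t * (p.1 - p.2))) ∂(ν.prod ν) := by
    apply integral_mono
    · exact (integrable_const (1:ℝ)).sub (integrable_cos_aux ν (2*t))
    · exact ((integrable_const (1:ℝ)).sub (integrable_cos_aux ν t)).const_mul 4
    · intro p
      have h := cos_double_ineq (t * (p.1 - p.2))
      have he : (2*t) * (p.1 - p.2) = 2 * (t * (p.1 - p.2)) := by ring
      dsimp only
      rw [he]
      linarith
  rw [integral_sub ((integrable_const (1:ℝ))) (integrable_cos_aux ν (2*t))] at hmono
  rw [integral_const_mul, integral_sub ((integrable_const (1:ℝ))) (integrable_cos_aux ν t)]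
    at hmono
  simp only [integral_const, measure_univ, probReal_univ, one_smul, smul_eq_mul, mul_one] at hmono
  linarith

/-- If the characteristic function of an infinitely divisible law is nonzero at `t`,
it is nonzero at `2t`. -/
lemma charF_double_ne_zero (μ : Measure ℝ) [IsProbabilityMeasure μ]
    (hID : InfDivisible μ) (t : ℝ) (h : charF μ t ≠ 0) : charF μ (2 * t) ≠ 0 := by
  intro h2
  have hc : 0 < Complex.normSq (charF μ t) := Complex.normSq_pos.mpr h
  obtain ⟨n, hn⟩ := exists_pow_lt_of_lt_one hc (by norm_num : (3/4 : ℝ) < 1)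
  have hc1 : Complex.normSq (charF μ t) ≤ 1 := by
    have := Complex.sq_norm (charF μ t)
    have hb : ‖charF μ t‖ ≤ 1 := by
      rw [charF]
      calc ‖∫ x, Complex.exp (Complex.I * t * x) ∂μ‖
          ≤ ∫ x, ‖Complex.exp (Complex.I * t * x)‖ ∂μ := norm_integral_le_integral_norm _
        _ ≤ 1 := by
            have h : ∀ x : ℝ, ‖Complex.exp (Complex.I * t * x)‖ = 1 :=
              fun x => norm_cexp_I_mul t x
            simp [h]
    nlinarith [norm_nonneg (charF μ t)]
  have hnpos : 0 < n := by
    rcases Nat.eq_zero_or_pos n with h0 | h0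
    · exfalso; rw [h0, pow_zero] at hn; linarith
    · exact h0
  obtain ⟨ν, hν, hμν⟩ := hID n hnpos
  have hφ : ∀ u : ℝ, charF μ u = (charF ν u) ^ n := by
    intro u; rw [hμν, charF_pow]
  have hs2 : Complex.normSq (charF ν (2 * t)) = 0 := by
    have : (Complex.normSq (charF ν (2 * t))) ^ n = 0 := by
      rw [← map_pow Complex.normSq, ← hφ, h2, Complex.normSq_zero]
    exact pow_eq_zero_iff hnpos.ne' |>.mp this
  have hsle : Complex.normSq (charF ν t) ≤ 3/4 := by
    have := charF_double_ineq ν t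
    rw [hs2] at this
    linarith
  have hceq : Complex.normSq (charF μ t) = (Complex.normSq (charF ν t)) ^ n := by
    rw [hφ, map_pow Complex.normSq]
  have : Complex.normSq (charF μ t) ≤ (3/4 : ℝ) ^ n := by
    rw [hceq]
    exact pow_le_pow_left₀ (Complex.normSq_nonneg _) hsle n
  linarith

/-- A probability law whose characteristic function vanishes somewhere is not
infinitely divisible; consequently, if `λ ≥ x/4` for some root `x` of `L_m`,
the generalized Poisson distribution `𝒫(λ,m)` (whose characteristic function is
`exp(λ(e^{iu}-1)) e^{imu} L_m(2λ(1-cos u))`) is not infinitely divisible. -/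
theorem not_infDivisible_of_charFun_vanishes :
    (∀ μ : Measure ℝ, IsProbabilityMeasure μ → (∃ t : ℝ, charF μ t = 0) →
      ¬ InfDivisible μ) ∧
    (∀ (m : ℕ) (lam x : ℝ), 0 < lam → 0 < x → lag m 0 x = 0 → x / 4 ≤ lam →
      ∀ μ : Measure ℝ, IsProbabilityMeasure μ →
        (∀ u : ℝ, charF μ u =
          Complex.exp (lam * (Complex.exp (Complex.I * u) - 1)) *
            Complex.exp (Complex.I * m * u) *
            (lag m 0 (2 * lam * (1 - Real.cos u)) : ℂ)) →
        ¬ InfDivisible μ) := by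
  have main : ∀ μ : Measure ℝ, IsProbabilityMeasure μ → (∃ t : ℝ, charF μ t = 0) →
      ¬ InfDivisible μ := by
    intro μ hμ ⟨t₀, ht₀⟩ hID
    -- zeros propagate to `t₀ / 2^k`
    have hz : ∀ k : ℕ, charF μ (t₀ / 2 ^ k) = 0 := by
      intro k
      induction k with
      | zero => simpa using ht₀
      | succ k ih =>
        by_contra hne
        have := charF_double_ne_zero μ hID (t₀ / 2 ^ (k+1)) hne
        rw [show 2 * (t₀ / 2 ^ (k+1)) = t₀ / 2 ^ k by
          rw [pow_succ]; field_simp] at this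
        exact this ih
    -- contradiction with continuity at 0
    have hlim : Filter.Tendsto (fun k : ℕ => t₀ / 2 ^ k) Filter.atTop (nhds 0) := by
      have : Filter.Tendsto (fun k : ℕ => ((1:ℝ)/2) ^ k) Filter.atTop (nhds 0) :=
        tendsto_pow_atTop_nhds_zero_of_lt_one (by norm_num) (by norm_num)
      have := this.const_mul t₀
      simpa [div_eq_mul_inv, mul_comm, mul_pow] using this
    have hcont : Filter.Tendsto (fun k : ℕ => charF μ (t₀ / 2 ^ k)) Filter.atTop
        (nhds (charF μ 0)) := ((continuous_charF μ).tendsto 0).comp hlim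
    rw [charF_zero_eq_one] at hcont
    have : Filter.Tendsto (fun _ : ℕ => (0:ℂ)) Filter.atTop (nhds 1) := by
      simpa [hz] using hcont
    have h01 : (0:ℂ) = 1 := tendsto_nhds_unique tendsto_const_nhds this
    exact zero_ne_one h01
  refine ⟨main, ?_⟩
  intro m lam x hlam hx hroot hle μ hμ hchar
  apply main μ hμ
  set u := Real.arccos (1 - x / (2 * lam)) with hu
  have hb1 : -1 ≤ 1 - x / (2 * lam) := by
    rw [neg_le_sub_iff_le_add]
    rw [div_le_iff₀ (by linarith)]
    linarith
  have hb2 : 1 - x / (2 * lam) ≤ 1 := by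
    have : 0 ≤ x / (2 * lam) := by positivity
    linarith
  have hcos : Real.cos u = 1 - x / (2 * lam) := Real.cos_arccos hb1 hb2
  have harg : 2 * lam * (1 - Real.cos u) = x := by
    rw [hcos]
    field_simp
    ring
  refine ⟨u, ?_⟩
  rw [hchar u, harg, hroot]
  simp
end

section
/- The probability generating function of the generalized Poisson distribution \mathcal{P}(\lambda, m) is P(z) = \sum_{j \geq 0} p_j(\lambda, m) z^j = \exp(\lambda(z-1)) z^m L_m(-\lambda(1-z)^2/z) for z \in (0, 1]. -/
open Finset

lemma summable_exp_like (s : ℕ) (x : ℝ) :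
    Summable (fun i : ℕ => (i.choose s : ℝ) * x ^ i / i.factorial) := by
  rw [← summable_nat_add_iff s]
  have h : ∀ i : ℕ, ((i + s).choose s : ℝ) * x ^ (i + s) / (i + s).factorial
      = (x ^ s / s.factorial) * (x ^ i / i.factorial) := by
    intro i
    rw [Nat.cast_choose ℝ (Nat.le_add_left s i)]
    have h1 : (i + s) - s = i := by omega
    rw [h1, pow_add]
    have h2 : (s.factorial : ℝ) ≠ 0 := Nat.cast_ne_zero.2 s.factorial_ne_zero
    have h3 : (i.factorial : ℝ) ≠ 0 := Nat.cast_ne_zero.2 i.factorial_ne_zero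
    have h4 : ((i + s).factorial : ℝ) ≠ 0 := Nat.cast_ne_zero.2 (i + s).factorial_ne_zero
    field_simp
  exact (Summable.congr (((Real.summable_pow_div_factorial x).mul_left
    (x ^ s / s.factorial))) (fun i => (h i).symm))


lemma cast_choose_add_right (i l : ℕ) :
    ((i + l).choose l : ℝ) = (i + l).factorial / (l.factorial * i.factorial) := by
  rw [Nat.cast_choose ℝ (Nat.le_add_left l i)]
  rw [Nat.add_sub_cancel]

lemma shift_eq (k l : ℕ) (x : ℝ) (i : ℕ) :
    ((i + l).choose k : ℝ) * ((i + l).choose l) * x ^ (i + l) / (i + l).factorial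
      = ∑ p ∈ range (k + 1),
          ((l.choose (k - p) : ℝ) * x ^ l / l.factorial)
            * ((i.choose p : ℝ) * x ^ i / i.factorial) := by
  have hv : ((i + l).choose k : ℝ)
      = ∑ p ∈ range (k + 1), (i.choose p : ℝ) * (l.choose (k - p)) := by
    rw [Nat.add_choose_eq, Finset.Nat.sum_antidiagonal_eq_sum_range_succ_mk]
    push_cast
    rfl
  rw [hv, sum_mul, sum_mul, sum_div]
  refine Finset.sum_congr rfl fun p _ => ?_
  rw [cast_choose_add_right, pow_add]
  have h2 : (l.factorial : ℝ) ≠ 0 := Nat.cast_ne_zero.2 l.factorial_ne_zero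
  have h3 : (i.factorial : ℝ) ≠ 0 := Nat.cast_ne_zero.2 i.factorial_ne_zero
  have h4 : ((i + l).factorial : ℝ) ≠ 0 := Nat.cast_ne_zero.2 (i + l).factorial_ne_zero
  field_simp


lemma summable_choose2 (k l : ℕ) (x : ℝ) :
    Summable (fun j : ℕ => (j.choose k : ℝ) * (j.choose l) * x ^ j / j.factorial) := by
  rw [← summable_nat_add_iff l]
  refine Summable.congr (f := fun i : ℕ => ∑ p ∈ range (k + 1),
      ((l.choose (k - p) : ℝ) * x ^ l / l.factorial)
        * ((i.choose p : ℝ) * x ^ i / i.factorial)) ?_ fun i => (shift_eq k l x i).symm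
  exact summable_sum fun p _ => ((summable_exp_like p x).mul_left _)

lemma tsum_exp_like (s : ℕ) (x : ℝ) :
    ∑' i : ℕ, (i.choose s : ℝ) * x ^ i / i.factorial
      = x ^ s * Real.exp x / s.factorial := by
  have hinj : Function.Injective (fun i : ℕ => i + s) := add_left_injective s
  have hsupp : Function.support (fun i : ℕ => (i.choose s : ℝ) * x ^ i / i.factorial)
      ⊆ Set.range (fun i : ℕ => i + s) := by
    intro j hj
    simp only [Function.mem_support] at hj
    have hs : s ≤ j := by
      by_contra hc
      rw [Nat.choose_eq_zero_of_lt (by omega)] at hj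
      simp at hj
    exact ⟨j - s, by simpa using Nat.sub_add_cancel hs⟩
  rw [← Function.Injective.tsum_eq hinj hsupp]
  have h : ∀ i : ℕ, ((i + s).choose s : ℝ) * x ^ (i + s) / (i + s).factorial
      = (x ^ s / s.factorial) * (x ^ i / i.factorial) := by
    intro i
    rw [Nat.cast_choose ℝ (Nat.le_add_left s i)]
    have h1 : (i + s) - s = i := by omega
    rw [h1, pow_add]
    have h2 : (s.factorial : ℝ) ≠ 0 := Nat.cast_ne_zero.2 s.factorial_ne_zero
    have h3 : (i.factorial : ℝ) ≠ 0 := Nat.cast_ne_zero.2 i.factorial_ne_zero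
    have h4 : ((i + s).factorial : ℝ) ≠ 0 := Nat.cast_ne_zero.2 (i + s).factorial_ne_zero
    field_simp
  rw [tsum_congr h, tsum_mul_left, Real.exp_eq_exp_ℝ, NormedSpace.exp_eq_tsum_div]
  ring

lemma tsum_choose2 (k l : ℕ) (x : ℝ) :
    ∑' j : ℕ, (j.choose k : ℝ) * (j.choose l) * x ^ j / j.factorial
      = Real.exp x * ∑ r ∈ range (k + 1),
          (k.choose r : ℝ) * (l.choose r) * r.factorial * x ^ (k + l - r)
            / (k.factorial * l.factorial) := by
  have hinj : Function.Injective (fun i : ℕ => i + l) := add_left_injective l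
  have hsupp : Function.support
      (fun j : ℕ => (j.choose k : ℝ) * (j.choose l) * x ^ j / j.factorial)
      ⊆ Set.range (fun i : ℕ => i + l) := by
    intro j hj
    simp only [Function.mem_support] at hj
    have hs : l ≤ j := by
      by_contra hc
      rw [Nat.choose_eq_zero_of_lt (show j < l by omega)] at hj
      simp at hj
    exact ⟨j - l, by simpa using Nat.sub_add_cancel hs⟩
  rw [← Function.Injective.tsum_eq hinj hsupp]
  rw [tsum_congr (shift_eq k l x),
    Summable.tsum_finsetSum (fun p _ => (summable_exp_like p x).mul_left _)]
  simp_rw [tsum_mul_left, tsum_exp_like]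
  rw [← Finset.sum_range_reflect, Finset.mul_sum]
  refine Finset.sum_congr rfl fun r hr => ?_
  have hrk : r ≤ k := Nat.lt_succ_iff.mp (mem_range.mp hr)
  have h1 : k + 1 - 1 - r = k - r := by omega
  have h2 : k - (k - r) = r := by omega
  rw [h1, h2, Nat.cast_choose ℝ hrk, show k + l - r = l + (k - r) by omega, pow_add]
  have hk : (k.factorial : ℝ) ≠ 0 := Nat.cast_ne_zero.2 k.factorial_ne_zero
  have hl : (l.factorial : ℝ) ≠ 0 := Nat.cast_ne_zero.2 l.factorial_ne_zero
  have hr' : (r.factorial : ℝ) ≠ 0 := Nat.cast_ne_zero.2 r.factorial_ne_zero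
  have hkr : ((k - r).factorial : ℝ) ≠ 0 := Nat.cast_ne_zero.2 (k - r).factorial_ne_zero
  field_simp

lemma lag_reflect (a b : ℕ) (hab : a ≤ b) (lam : ℝ) :
    lag a (b - a) lam
      = ∑ k ∈ range (a + 1), (b.choose k : ℝ) * (-lam) ^ (a - k) / (a - k).factorial := by
  unfold lag
  rw [show a + (b - a) = b by omega, ← Finset.sum_range_reflect]
  refine Finset.sum_congr rfl fun i hi => ?_
  have hia : i ≤ a := Nat.lt_succ_iff.mp (mem_range.mp hi)
  rw [show a + 1 - 1 - i = a - i by omega, show a - (a - i) = i by omega]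

lemma key1 (a b : ℕ) (hab : a ≤ b) (lam : ℝ) :
    ((a.factorial : ℝ) / b.factorial) * lam ^ (b - a) * (lag a (b - a) lam) ^ 2
      = ∑ k ∈ range (a + 1), ∑ l ∈ range (a + 1),
          (-1 : ℝ) ^ (k + l) * (a.choose k) * (a.choose l) * (b.choose k) * (b.choose l)
            * k.factorial * l.factorial * lam ^ (a + b - k - l)
            / (a.factorial * b.factorial) := by
  rw [lag_reflect a b hab, sq, Finset.sum_mul_sum, Finset.mul_sum]
  refine Finset.sum_congr rfl fun k hk => ?_
  rw [Finset.mul_sum]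
  refine Finset.sum_congr rfl fun l hl => ?_
  have hka : k ≤ a := Nat.lt_succ_iff.mp (mem_range.mp hk)
  have hla : l ≤ a := Nat.lt_succ_iff.mp (mem_range.mp hl)
  have hs1 : (-lam) ^ (a - k) = (-1 : ℝ) ^ (a - k) * lam ^ (a - k) := by
    rw [neg_pow]
  have hs2 : (-lam) ^ (a - l) = (-1 : ℝ) ^ (a - l) * lam ^ (a - l) := by
    rw [neg_pow]
  have hsgn : (-1 : ℝ) ^ (a - k) * (-1 : ℝ) ^ (a - l) = (-1 : ℝ) ^ (k + l) := by
    have : (-1 : ℝ) ^ (a - k) * (-1 : ℝ) ^ (a - l) * ((-1 : ℝ) ^ (k + l)) ^ 2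
        = (-1 : ℝ) ^ (k + l) * (((-1 : ℝ) ^ ((a - k) + k)) * ((-1 : ℝ) ^ ((a - l) + l))) := by
      rw [pow_add, pow_add]; ring
    have h2 : ((-1 : ℝ) ^ (k + l)) ^ 2 = 1 := by
      rw [← pow_mul, mul_comm, pow_mul]; norm_num
    have h3 : (a - k) + k = a := by omega
    have h4 : (a - l) + l = a := by omega
    rw [h2, h3, h4, mul_one] at this
    rw [this, ← pow_add, show a + a = 2 * a by ring, pow_mul]
    norm_num
  have hpow : lam ^ (b - a) * (lam ^ (a - k) * lam ^ (a - l)) = lam ^ (a + b - k - l) := by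
    rw [← pow_add, ← pow_add]
    congr 1
    omega
  have h2 : (a.factorial : ℝ) ≠ 0 := Nat.cast_ne_zero.2 a.factorial_ne_zero
  have h3 : (b.factorial : ℝ) ≠ 0 := Nat.cast_ne_zero.2 b.factorial_ne_zero
  have h4 : ((a - k).factorial : ℝ) ≠ 0 := Nat.cast_ne_zero.2 (a - k).factorial_ne_zero
  have h5 : ((a - l).factorial : ℝ) ≠ 0 := Nat.cast_ne_zero.2 (a - l).factorial_ne_zero
  have h6 : (k.factorial : ℝ) ≠ 0 := Nat.cast_ne_zero.2 k.factorial_ne_zero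
  have h7 : (l.factorial : ℝ) ≠ 0 := Nat.cast_ne_zero.2 l.factorial_ne_zero
  rw [Nat.cast_choose ℝ hka, Nat.cast_choose ℝ hla, hs1, hs2]
  rw [← hpow, ← hsgn]
  field_simp

lemma pgen_eq_s12 (lam : ℝ) (m j : ℕ) :
    pgen lam m j = Real.exp (-lam) * ∑ k ∈ range (m + 1), ∑ l ∈ range (m + 1),
      (-1 : ℝ) ^ (k + l) * (j.choose k) * (j.choose l) * (m.choose k) * (m.choose l)
        * k.factorial * l.factorial * lam ^ (j + m - k - l)
        / (j.factorial * m.factorial) := by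
  have h0 : pgen lam m j = Real.exp (-lam) *
      (((min m j).factorial / ((max m j).factorial : ℝ)) * lam ^ (max m j - min m j) *
        (lag (min m j) (max m j - min m j) lam) ^ 2) := by
    unfold pgen; ring
  rw [h0, key1 _ _ min_le_max lam]
  congr 1
  rcases le_total m j with h | h
  · rw [min_eq_left h, max_eq_right h]
    refine Finset.sum_congr rfl fun k hk => Finset.sum_congr rfl fun l hl => ?_
    rw [show m + j - k - l = j + m - k - l by omega]
    ring
  · rw [min_eq_right h, max_eq_left h]
    have hsub : range (j + 1) ⊆ range (m + 1) := by
      intro x hx; simp only [mem_range] at *; omega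
    have hin : ∀ k ∈ range (j + 1),
        (∑ l ∈ range (j + 1),
          (-1 : ℝ) ^ (k + l) * (j.choose k) * (j.choose l) * (m.choose k) * (m.choose l)
            * k.factorial * l.factorial * lam ^ (j + m - k - l)
            / (j.factorial * m.factorial))
        = ∑ l ∈ range (m + 1),
          (-1 : ℝ) ^ (k + l) * (j.choose k) * (j.choose l) * (m.choose k) * (m.choose l)
            * k.factorial * l.factorial * lam ^ (j + m - k - l)
            / (j.factorial * m.factorial) := by
      intro k _
      refine Finset.sum_subset hsub fun l _ hl => ?_
      have : j.choose l = 0 := Nat.choose_eq_zero_of_lt (by simp only [mem_range] at hl; omega)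
      simp [this]
    rw [Finset.sum_congr rfl hin]
    refine Finset.sum_subset hsub fun k _ hk => Finset.sum_eq_zero fun l _ => ?_
    have : j.choose k = 0 := Nat.choose_eq_zero_of_lt (by simp only [mem_range] at hk; omega)
    simp [this]

lemma binom1 (m r : ℕ) (hr : r ≤ m) (z : ℝ) :
    ∑ k ∈ range (m + 1), (-1 : ℝ) ^ k * (m.choose k) * (k.choose r) * z ^ (k - r)
      = (-1) ^ r * (m.choose r) * (1 - z) ^ (m - r) := by
  have hsub : Finset.Ico r (m + 1) ⊆ range (m + 1) := by
    intro x hx; simp only [mem_range, mem_Ico] at *; omega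
  rw [← Finset.sum_subset hsub (fun k hk hk2 => by
    have : k.choose r = 0 := Nat.choose_eq_zero_of_lt
      (by simp only [mem_range, mem_Ico] at *; omega)
    simp [this])]
  rw [Finset.sum_Ico_eq_sum_range, show m + 1 - r = (m - r) + 1 by omega]
  have hterm : ∀ s ∈ range ((m - r) + 1),
      (-1 : ℝ) ^ (r + s) * (m.choose (r + s)) * ((r + s).choose r) * z ^ ((r + s) - r)
        = ((-1 : ℝ) ^ r * (m.choose r)) * ((-z) ^ s * 1 ^ ((m - r) - s) * ((m - r).choose s)) := by
    intro s hs
    have hs' : s ≤ m - r := Nat.lt_succ_iff.mp (mem_range.mp hs)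
    have hc : m.choose (r + s) * (r + s).choose r = m.choose r * (m - r).choose s := by
      have h := Nat.choose_mul (n := m) (Nat.le_add_right r s)
      simpa using h
    have hcR : ((m.choose (r + s)) : ℝ) * ((r + s).choose r)
        = (m.choose r : ℝ) * ((m - r).choose s) := by exact_mod_cast hc
    rw [show (r + s) - r = s by omega, pow_add, neg_pow z]
    linear_combination ((-1 : ℝ) ^ r * (-1) ^ s * z ^ s) * hcR
  rw [Finset.sum_congr rfl hterm, ← Finset.mul_sum]
  congr 1
  rw [show (1 : ℝ) - z = -z + 1 by ring, add_pow]

/-- The probability generating function of `𝒫(λ,m)` is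
`P(z) = exp(λ(z-1)) z^m L_m(-λ(1-z)²/z)` for `z ∈ (0,1]`. -/
theorem pgen_pgf (lam : ℝ) (hlam : 0 < lam) (m : ℕ) (z : ℝ) (hz : z ∈ Set.Ioc (0 : ℝ) 1) :
    ∑' j : ℕ, pgen lam m j * z ^ j =
      Real.exp (lam * (z - 1)) * z ^ m * lag m 0 (-lam * (1 - z) ^ 2 / z) := by

  obtain ⟨hz0, hz1⟩ := hz
  have hzne : z ≠ 0 := ne_of_gt hz0
  have hlne : lam ≠ 0 := ne_of_gt hlam
  have hmfac : (m.factorial : ℝ) ≠ 0 := Nat.cast_ne_zero.2 m.factorial_ne_zero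
  set x : ℝ := lam * z with hx
  set c : ℕ → ℕ → ℝ := fun k l => Real.exp (-lam) * (-1 : ℝ) ^ (k + l) *
      (m.choose k) * (m.choose l) * k.factorial * l.factorial * lam ^ m
      / (m.factorial * lam ^ k * lam ^ l) with hc
  -- Step 1: pointwise rewrite of the summand
  have hpoint : ∀ j : ℕ, pgen lam m j * z ^ j
      = ∑ k ∈ range (m + 1), ∑ l ∈ range (m + 1),
          c k l * ((j.choose k : ℝ) * (j.choose l) * x ^ j / j.factorial) := by
    intro j
    rw [pgen_eq_s12 lam m j]
    simp only [Finset.mul_sum, Finset.sum_mul]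
    refine Finset.sum_congr rfl fun k hk => Finset.sum_congr rfl fun l hl => ?_
    have hkm : k ≤ m := Nat.lt_succ_iff.mp (mem_range.mp hk)
    have hlm : l ≤ m := Nat.lt_succ_iff.mp (mem_range.mp hl)
    by_cases hkj : k ≤ j
    · by_cases hlj : l ≤ j
      · have hrw : lam ^ (j + m - k - l) = lam ^ j * lam ^ m / (lam ^ k * lam ^ l) := by
          rw [eq_div_iff (by positivity), ← pow_add, ← pow_add, ← pow_add]
          congr 1
          omega
        have hjfac : (j.factorial : ℝ) ≠ 0 := Nat.cast_ne_zero.2 j.factorial_ne_zero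
        rw [hrw, hc, hx, mul_pow]
        field_simp
      · have : j.choose l = 0 := Nat.choose_eq_zero_of_lt (by omega)
        simp [this]
    · have : j.choose k = 0 := Nat.choose_eq_zero_of_lt (by omega)
      simp [this]
  rw [show (∑' j : ℕ, pgen lam m j * z ^ j) = _ from tsum_congr hpoint]
  rw [Summable.tsum_finsetSum (fun k _ => summable_sum
    (fun l _ => (summable_choose2 k l x).mul_left (c k l)))]
  have hswap : ∀ k ∈ range (m + 1),
      (∑' j : ℕ, ∑ l ∈ range (m + 1),
          c k l * ((j.choose k : ℝ) * (j.choose l) * x ^ j / j.factorial))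
        = ∑ l ∈ range (m + 1), c k l * (Real.exp x * ∑ r ∈ range (k + 1),
            (k.choose r : ℝ) * (l.choose r) * r.factorial * x ^ (k + l - r)
              / (k.factorial * l.factorial)) := by
    intro k _
    rw [Summable.tsum_finsetSum (fun l _ => (summable_choose2 k l x).mul_left (c k l))]
    exact Finset.sum_congr rfl fun l _ => by rw [tsum_mul_left, tsum_choose2]
  rw [Finset.sum_congr rfl hswap]
  -- Step 2: finite rearrangement
  set A : ℕ → ℝ := fun r => Real.exp (-lam) * Real.exp x * r.factorial * lam ^ (m - r)
      * z ^ r / m.factorial with hA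
  set v : ℕ → ℕ → ℝ := fun r k => (-1 : ℝ) ^ k * (m.choose k) * (k.choose r) * z ^ (k - r)
    with hv
  have step1 : ∀ k ∈ range (m + 1), ∀ l ∈ range (m + 1),
      c k l * (Real.exp x * ∑ r ∈ range (k + 1),
          (k.choose r : ℝ) * (l.choose r) * r.factorial * x ^ (k + l - r)
            / (k.factorial * l.factorial))
        = ∑ r ∈ range (m + 1), c k l * Real.exp x *
            ((k.choose r : ℝ) * (l.choose r) * r.factorial * x ^ (k + l - r)
              / (k.factorial * l.factorial)) := by
    intro k hk l hl
    have hkm : k ≤ m := Nat.lt_succ_iff.mp (mem_range.mp hk)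
    have hsub : range (k + 1) ⊆ range (m + 1) := by
      intro t ht; simp only [mem_range] at *; omega
    rw [Finset.mul_sum, Finset.mul_sum]
    simp only [← mul_assoc]
    refine Finset.sum_subset hsub fun r _ hr => ?_
    have : k.choose r = 0 := Nat.choose_eq_zero_of_lt (by simp only [mem_range] at hr; omega)
    simp [this]
  rw [Finset.sum_congr rfl fun k hk => Finset.sum_congr rfl fun l hl => step1 k hk l hl]
  rw [Finset.sum_congr rfl fun k (_ : k ∈ range (m + 1)) => Finset.sum_comm,
    Finset.sum_comm]
  -- RHS as a sum over r
  have hexp : Real.exp (-lam) * Real.exp x = Real.exp (lam * (z - 1)) := by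
    rw [← Real.exp_add]; congr 1; rw [hx]; ring
  have hrhs : Real.exp (lam * (z - 1)) * z ^ m * lag m 0 (-lam * (1 - z) ^ 2 / z)
      = ∑ r ∈ range (m + 1), A r * ((-1 : ℝ) ^ r * (m.choose r) * (1 - z) ^ (m - r)) ^ 2 := by
    unfold lag
    rw [Finset.mul_sum, ← Finset.sum_range_reflect]
    refine Finset.sum_congr rfl fun r hr => ?_
    have hrm : r ≤ m := Nat.lt_succ_iff.mp (mem_range.mp hr)
    rw [show m + 1 - 1 - r = m - r by omega, show m - (m - r) = r by omega]
    have h1 : (-(-lam * (1 - z) ^ 2 / z)) ^ (m - r)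
        = lam ^ (m - r) * ((1 - z) ^ (m - r)) ^ 2 / z ^ (m - r) := by
      rw [show -(-lam * (1 - z) ^ 2 / z) = lam * (1 - z) ^ 2 / z by ring, div_pow, mul_pow,
        ← pow_mul, ← pow_mul, mul_comm (m - r) 2]
    have hzm : z ^ m = z ^ (m - r) * z ^ r := by rw [← pow_add]; congr 1; omega
    have hzmr : (z : ℝ) ^ (m - r) ≠ 0 := pow_ne_zero _ hzne
    have hmr : ((m - r).factorial : ℝ) ≠ 0 := Nat.cast_ne_zero.2 (m - r).factorial_ne_zero
    have hrfac : (r.factorial : ℝ) ≠ 0 := Nat.cast_ne_zero.2 r.factorial_ne_zero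
    have hsq : ((-1 : ℝ) ^ r) ^ 2 = 1 := by
      rw [← pow_mul, mul_comm, pow_mul]; norm_num
    rw [h1, hzm, ← hexp, Nat.add_zero, Nat.cast_choose ℝ hrm, mul_pow, mul_pow, hsq]
    simp only [hA]
    field_simp
  rw [hrhs]
  refine Finset.sum_congr rfl fun r hr => ?_
  have hrm : r ≤ m := Nat.lt_succ_iff.mp (mem_range.mp hr)
  have hterm : ∀ k ∈ range (m + 1), ∀ l ∈ range (m + 1),
      c k l * Real.exp x *
          ((k.choose r : ℝ) * (l.choose r) * r.factorial * x ^ (k + l - r)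
            / (k.factorial * l.factorial))
        = (A r * v r k) * v r l := by
    intro k hk l hl
    have hkm : k ≤ m := Nat.lt_succ_iff.mp (mem_range.mp hk)
    have hlm : l ≤ m := Nat.lt_succ_iff.mp (mem_range.mp hl)
    by_cases hrk : r ≤ k
    · by_cases hrl : r ≤ l
      · have hkfac : (k.factorial : ℝ) ≠ 0 := Nat.cast_ne_zero.2 k.factorial_ne_zero
        have hlfac : (l.factorial : ℝ) ≠ 0 := Nat.cast_ne_zero.2 l.factorial_ne_zero
        have e1 : lam ^ m = lam ^ (m - r) * lam ^ r := by rw [← pow_add]; congr 1; omega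
        have e2 : lam ^ k = lam ^ (k - r) * lam ^ r := by rw [← pow_add]; congr 1; omega
        have e3 : lam ^ l = lam ^ (l - r) * lam ^ r := by rw [← pow_add]; congr 1; omega
        have e4 : x ^ (k + l - r)
            = (lam ^ (k - r) * lam ^ (l - r) * lam ^ r) *
              (z ^ (k - r) * z ^ (l - r) * z ^ r) := by
          rw [hx, mul_pow, ← pow_add, ← pow_add, ← pow_add, ← pow_add]
          congr 2 <;> omega
        simp only [hc, hA, hv]
        rw [e4, e1, e2, e3]
        have hlr : (lam : ℝ) ^ r ≠ 0 := pow_ne_zero _ hlne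
        have hlkr : (lam : ℝ) ^ (k - r) ≠ 0 := pow_ne_zero _ hlne
        have hllr : (lam : ℝ) ^ (l - r) ≠ 0 := pow_ne_zero _ hlne
        field_simp
        ring
      · have h0 : l.choose r = 0 := Nat.choose_eq_zero_of_lt (by omega)
        simp [h0, hv]
    · have h0 : k.choose r = 0 := Nat.choose_eq_zero_of_lt (by omega)
      simp [h0, hv]
  rw [Finset.sum_congr rfl fun k hk => Finset.sum_congr rfl fun l hl => hterm k hk l hl]
  rw [← Finset.sum_mul_sum, ← Finset.mul_sum, binom1 m r hrm z]
  ring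
end

section
/- For every nonnegative integer m and \lambda > 0, L_m(2\lambda(1-\cos u)) = \gamma_0(\lambda,m)/2 + \sum_{k=1}^m \gamma_k(\lambda,m) \cos(ku) for all real u, where \gamma_k(\lambda,m) = 2(-1)^k \sum_{j=k}^m ((-m)_j (1/2)_j / (\Gamma(1+k+j)\Gamma(1-k+j))) (4\lambda)^j / j!. -/
lemma cos_pow_expand (j : ℕ) (u : ℝ) :
    (2 - 2 * Real.cos u) ^ j =
      ((2*j).choose j : ℝ) +
        2 * ∑ k ∈ Finset.Icc 1 j, (-1:ℝ)^k * ((2*j).choose (j-k)) * Real.cos (k*u) := by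
  set z : ℂ := Complex.exp (u * Complex.I) with hzdef
  have hz : z ≠ 0 := Complex.exp_ne_zero _
  have hcos : ((2 - 2 * Real.cos u : ℝ) : ℂ) = (-1) * (z - 1)^2 * z⁻¹ := by
    have h1 : Complex.cos u = (z + z⁻¹) / 2 := by
      rw [hzdef, ← Complex.exp_neg, Complex.cos]
      ring_nf
    push_cast
    rw [h1]
    field_simp
    ring
  have hexp : ((2 - 2 * Real.cos u : ℝ) : ℂ)^j =
      ∑ r ∈ Finset.range (2*j+1),
        (((-1:ℝ)^(j+r) * ((2*j).choose r) : ℝ) : ℂ) *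
          Complex.exp ((((((r:ℝ) - (j:ℝ)) * u) : ℝ) : ℂ) * Complex.I) := by
    rw [hcos]
    have hb : (z - 1)^(2*j) = ∑ r ∈ Finset.range (2*j+1),
        (-1:ℂ)^(r + 2*j) * z^r * 1^(2*j - r) * ((2*j).choose r) := sub_pow z 1 (2*j)
    rw [mul_pow, mul_pow, ← pow_mul, hb, Finset.mul_sum, Finset.sum_mul]
    refine Finset.sum_congr rfl fun r hr => ?_
    have hsign : (-1:ℂ)^j * ((-1:ℂ)^(r + 2*j)) = (-1:ℂ)^(j+r) := by
      rw [← pow_add]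
      have h : j + (r + 2*j) = (j + r) + 2*j := by ring
      rw [h, pow_add]
      simp [pow_mul]
    have hzr : z^r * (z⁻¹)^j = Complex.exp ((((((r:ℝ) - (j:ℝ)) * u) : ℝ) : ℂ) * Complex.I) := by
      rw [← Complex.exp_nat_mul, ← Complex.exp_neg, ← Complex.exp_nat_mul, ← Complex.exp_add]
      congr 1
      push_cast
      ring
    calc (-1:ℂ)^j * ((-1:ℂ)^(r + 2*j) * z^r * 1^(2*j-r) * ((2*j).choose r)) * (z⁻¹)^j
        = ((-1:ℂ)^j * (-1:ℂ)^(r + 2*j)) * ((2*j).choose r) * (z^r * (z⁻¹)^j) := by ring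
      _ = (((-1:ℝ)^(j+r) * ((2*j).choose r) : ℝ) : ℂ) *
          Complex.exp ((((((r:ℝ) - (j:ℝ)) * u) : ℝ) : ℂ) * Complex.I) := by
          rw [hsign, hzr]; push_cast; ring
  have hre : (2 - 2 * Real.cos u)^j =
      ∑ r ∈ Finset.range (2*j+1), (-1:ℝ)^(j+r) * ((2*j).choose r) * Real.cos (((r:ℝ) - j) * u) := by
    have h := congrArg Complex.re hexp
    rw [← Complex.ofReal_pow, Complex.ofReal_re] at h
    rw [h, Complex.re_sum]
    exact Finset.sum_congr rfl fun r _ => by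
      rw [Complex.re_ofReal_mul, Complex.exp_ofReal_mul_I_re]
  rw [hre]
  have hsplit : ∑ r ∈ Finset.range (2*j+1), (-1:ℝ)^(j+r) * ((2*j).choose r) * Real.cos (((r:ℝ) - j) * u)
      = (∑ r ∈ Finset.Ico 0 j, (-1:ℝ)^(j+r) * ((2*j).choose r) * Real.cos (((r:ℝ) - j) * u))
      + ∑ r ∈ Finset.Ico j (2*j+1), (-1:ℝ)^(j+r) * ((2*j).choose r) * Real.cos (((r:ℝ) - j) * u) := by
    rw [Finset.range_eq_Ico, ← Finset.sum_Ico_consecutive _ (Nat.zero_le j) (by omega)]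
  rw [hsplit]
  have h1 : (∑ r ∈ Finset.Ico 0 j, (-1:ℝ)^(j+r) * ((2*j).choose r) * Real.cos (((r:ℝ) - j) * u))
      = ∑ k ∈ Finset.Icc 1 j, (-1:ℝ)^k * ((2*j).choose (j-k)) * Real.cos (k*u) := by
    refine Finset.sum_nbij' (fun r => j - r) (fun k => j - k) ?_ ?_ ?_ ?_ ?_
    · intro r hr; simp only [Finset.mem_Ico, Finset.mem_Icc] at *; omega
    · intro k hk; simp only [Finset.mem_Ico, Finset.mem_Icc] at *; omega
    · intro r hr; simp only [Finset.mem_Ico] at hr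
      show j - (j - r) = r; omega
    · intro k hk; simp only [Finset.mem_Icc] at hk
      show j - (j - k) = k; omega
    · intro r hr
      simp only [Finset.mem_Ico] at hr
      show _ = (-1:ℝ)^(j-r) * ((2*j).choose (j-(j-r))) * Real.cos (((j-r : ℕ):ℝ)*u)
      have h1 : j - (j - r) = r := by omega
      have hsign : (-1:ℝ)^(j+r) = (-1:ℝ)^(j-r) := by
        have h : j + r = (j - r) + 2*r := by omega
        rw [h, pow_add, pow_mul]; simp
      have hcosarg : ((r:ℝ) - j) * u = -(((j - r : ℕ):ℝ) * u) := by
        have h : ((j - r : ℕ):ℝ) = (j:ℝ) - r := by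
          have hrj : r ≤ j := by omega
          push_cast [hrj]; ring
        rw [h]; ring
      rw [h1, hsign, hcosarg, Real.cos_neg]
  have h2 : (∑ r ∈ Finset.Ico j (2*j+1), (-1:ℝ)^(j+r) * ((2*j).choose r) * Real.cos (((r:ℝ) - j) * u))
      = ((2*j).choose j : ℝ) + ∑ k ∈ Finset.Icc 1 j, (-1:ℝ)^k * ((2*j).choose (j-k)) * Real.cos (k*u) := by
    rw [Finset.sum_Ico_eq_sum_range]
    have hn : 2*j+1 - j = j+1 := by omega
    rw [hn]
    have hcongr : ∀ k ∈ Finset.range (j+1),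
        (-1:ℝ)^(j+(j+k)) * ((2*j).choose (j+k)) * Real.cos ((((j+k : ℕ):ℝ) - j) * u)
        = (-1:ℝ)^k * ((2*j).choose (j-k)) * Real.cos ((k:ℝ)*u) := by
      intro k hk
      have hkj : k ≤ j := Nat.lt_succ_iff.mp (Finset.mem_range.mp hk)
      have hsign : (-1:ℝ)^(j+(j+k)) = (-1:ℝ)^k := by
        have h : j+(j+k) = 2*j + k := by ring
        rw [h, pow_add, pow_mul]; simp
      have hch : (2*j).choose (j+k) = (2*j).choose (j-k) := by
        have h : 2*j - (j+k) = j - k := by omega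
        rw [← Nat.choose_symm (by omega : j+k ≤ 2*j), h]
      have hcosarg : (((j+k : ℕ):ℝ) - j) * u = (k:ℝ)*u := by push_cast; ring
      rw [hsign, hch, hcosarg]
    rw [Finset.sum_congr rfl hcongr, Finset.sum_range_succ']
    have hIcc : ∑ k ∈ Finset.Icc 1 j, (-1:ℝ)^k * ((2*j).choose (j-k)) * Real.cos ((k:ℝ)*u)
        = ∑ k ∈ Finset.range j, (-1:ℝ)^(k+1) * ((2*j).choose (j-(k+1))) * Real.cos (((k+1:ℕ):ℝ)*u) := by
      rw [← Finset.Ico_add_one_right_eq_Icc, Finset.sum_Ico_eq_sum_range]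
      exact Finset.sum_congr (by norm_num) fun k _ => by rw [add_comm 1 k]
    rw [hIcc]
    rw [add_comm]
    congr 1
    norm_num
  rw [h1, h2]
  ring


lemma desc_prod (m j : ℕ) (hjm : j ≤ m) :
    (∏ i ∈ Finset.range j, (-(m : ℝ) + i)) = (-1:ℝ)^j * (m.descFactorial j : ℝ) := by
  induction j with
  | zero => simp
  | succ n ih =>
    have hn : n ≤ m := by omega
    rw [Finset.prod_range_succ, ih hn, Nat.descFactorial_succ]
    have h : ((m - n : ℕ) : ℝ) = (m:ℝ) - n := by
      push_cast [hn]; ring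
    push_cast
    rw [h]
    ring

lemma half_prod (j : ℕ) :
    (∏ i ∈ Finset.range j, ((1:ℝ)/2 + i)) = ((2*j).factorial : ℝ) / (4^j * (j.factorial : ℝ)) := by
  induction j with
  | zero => simp
  | succ n ih =>
    rw [Finset.prod_range_succ, ih]
    have e1 : ((2*(n+1)).factorial : ℝ) = (2*(n:ℝ)+2)*(2*(n:ℝ)+1)*((2*n).factorial : ℝ) := by
      rw [show 2*(n+1) = (2*n+1)+1 by ring, Nat.factorial_succ, Nat.factorial_succ]
      push_cast; ring
    have e2 : ((n+1).factorial : ℝ) = ((n:ℝ)+1)*(n.factorial : ℝ) := by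
      rw [Nat.factorial_succ]; push_cast; ring
    rw [e1, e2]
    have h2 : ((2*n).factorial : ℝ) ≠ 0 := by positivity
    have h3 : ((n).factorial : ℝ) ≠ 0 := by positivity
    field_simp
    ring

lemma summand_eq (m k j : ℕ) (hkj : k ≤ j) (hjm : j ≤ m) (lam : ℝ) :
    (∏ i ∈ Finset.range j, (-(m : ℝ) + i)) * (∏ i ∈ Finset.range j, ((1 : ℝ) / 2 + i)) /
      (Real.Gamma (1 + k + j) * Real.Gamma (1 - (k : ℝ) + j)) *
      (4 * lam) ^ j / (Nat.factorial j : ℝ)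
    = ((-1:ℝ)^j * (m.choose j) * lam^j / (j.factorial : ℝ)) * (((2*j).choose (j-k) : ℝ)) := by
  have hg1 : Real.Gamma (1 + (k:ℝ) + j) = ((k+j).factorial : ℝ) := by
    rw [show (1 + (k:ℝ) + j) = ((k+j : ℕ) : ℝ) + 1 by push_cast; ring,
      Real.Gamma_nat_eq_factorial]
  have hg2 : Real.Gamma (1 - (k:ℝ) + j) = ((j-k).factorial : ℝ) := by
    rw [show (1 - (k:ℝ) + j) = ((j-k : ℕ) : ℝ) + 1 by push_cast [hkj]; ring,
      Real.Gamma_nat_eq_factorial]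
  have hc1 : ((m.choose j : ℕ) : ℝ) = (m.descFactorial j : ℝ) / (j.factorial : ℝ) := by
    rw [Nat.descFactorial_eq_factorial_mul_choose]
    have : ((j.factorial : ℕ) : ℝ) ≠ 0 := by positivity
    push_cast
    field_simp
  have hc2 : (((2*j).choose (j-k) : ℕ) : ℝ)
      = ((2*j).factorial : ℝ) / (((j-k).factorial : ℝ) * ((k+j).factorial : ℝ)) := by
    have h := Nat.choose_mul_factorial_mul_factorial (show j - k ≤ 2*j by omega)
    have h2j : 2*j - (j-k) = k+j := by omega
    rw [h2j] at h
    have h1 : (((j-k).factorial : ℕ) : ℝ) ≠ 0 := by positivity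
    have h2 : (((k+j).factorial : ℕ) : ℝ) ≠ 0 := by positivity
    field_simp
    try rw [← mul_assoc]
    exact_mod_cast h
  rw [desc_prod m j hjm, half_prod, hg1, hg2, hc1, hc2]
  have h1 : ((j.factorial : ℕ) : ℝ) ≠ 0 := by positivity
  have h2 : (((j-k).factorial : ℕ) : ℝ) ≠ 0 := by positivity
  have h3 : (((k+j).factorial : ℕ) : ℝ) ≠ 0 := by positivity
  field_simp
  ring




/-- The Fourier coefficients
`γ_k(λ,m) = 2(-1)^k ∑_{j=k}^m ((-m)_j (1/2)_j / (Γ(1+k+j) Γ(1-k+j))) (4λ)^j / j!`,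
where `(a)_j` is the Pochhammer (rising factorial) symbol. -/
noncomputable def gammaCoeff (lam : ℝ) (m k : ℕ) : ℝ :=
  2 * (-1) ^ k * ∑ j ∈ Finset.Icc k m,
    (∏ i ∈ Finset.range j, (-(m : ℝ) + i)) * (∏ i ∈ Finset.range j, ((1 : ℝ) / 2 + i)) /
      (Real.Gamma (1 + k + j) * Real.Gamma (1 - (k : ℝ) + j)) *
      (4 * lam) ^ j / (Nat.factorial j : ℝ)

lemma gammaCoeff_eq (lam : ℝ) (m k : ℕ) :
    gammaCoeff lam m k = 2 * (-1:ℝ)^k * ∑ j ∈ Finset.Icc k m,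
      ((-1:ℝ)^j * (m.choose j) * lam^j / (j.factorial : ℝ)) * (((2*j).choose (j-k) : ℝ)) := by
  unfold gammaCoeff
  congr 1
  refine Finset.sum_congr rfl fun j hj => ?_
  obtain ⟨hkj, hjm⟩ := Finset.mem_Icc.mp hj
  exact summand_eq m k j hkj hjm lam

/-- The Fourier (cosine) decomposition
`L_m(2λ(1-cos u)) = γ₀(λ,m)/2 + ∑_{k=1}^m γ_k(λ,m) cos(ku)`. -/
theorem laguerre_fourier_decomposition (m : ℕ) (lam : ℝ) (hlam : 0 < lam) (u : ℝ) :
    lag m 0 (2 * lam * (1 - Real.cos u)) =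
      gammaCoeff lam m 0 / 2 +
        ∑ k ∈ Finset.Icc 1 m, gammaCoeff lam m k * Real.cos (k * u) := by
  set c : ℕ → ℝ := fun j => (-1:ℝ)^j * (m.choose j) * lam^j / (j.factorial : ℝ) with hc
  -- LHS
  have hlag : lag m 0 (2 * lam * (1 - Real.cos u)) =
      ∑ j ∈ Finset.range (m+1), c j * (2 - 2*Real.cos u)^j := by
    unfold lag
    refine Finset.sum_congr rfl fun i hi => ?_
    have him : i ≤ m := Nat.lt_succ_iff.mp (Finset.mem_range.mp hi)
    have hch : (m + 0).choose (m - i) = m.choose i := by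
      rw [Nat.add_zero, Nat.choose_symm him]
    rw [hch, hc]
    have hx : (-(2 * lam * (1 - Real.cos u)))^i = (-1:ℝ)^i * lam^i * (2 - 2*Real.cos u)^i := by
      rw [show -(2 * lam * (1 - Real.cos u)) = (-1) * lam * (2 - 2*Real.cos u) by ring,
        mul_pow, mul_pow]
    rw [hx]
    ring
  rw [hlag]
  -- expand via trig lemma
  have hexp : ∑ j ∈ Finset.range (m+1), c j * (2 - 2*Real.cos u)^j
      = (∑ j ∈ Finset.range (m+1), c j * ((2*j).choose j : ℝ))
        + ∑ j ∈ Finset.range (m+1), ∑ k ∈ Finset.Icc 1 j,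
            2 * c j * ((-1:ℝ)^k * ((2*j).choose (j-k)) * Real.cos (k*u)) := by
    rw [← Finset.sum_add_distrib]
    refine Finset.sum_congr rfl fun j _ => ?_
    rw [cos_pow_expand j u, mul_add]
    congr 1
    rw [Finset.mul_sum, Finset.mul_sum]
    exact Finset.sum_congr rfl fun k _ => by ring
  rw [hexp]
  -- first part
  have h0 : gammaCoeff lam m 0 / 2 = ∑ j ∈ Finset.range (m+1), c j * ((2*j).choose j : ℝ) := by
    rw [gammaCoeff_eq]
    have hIcc : Finset.Icc 0 m = Finset.range (m+1) := by
      ext x; simp [Nat.lt_succ_iff]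
    rw [hIcc]
    simp only [pow_zero, Nat.sub_zero, hc]
    ring
  -- second part: swap the double sum
  have h1 : ∑ k ∈ Finset.Icc 1 m, gammaCoeff lam m k * Real.cos (k * u)
      = ∑ j ∈ Finset.range (m+1), ∑ k ∈ Finset.Icc 1 j,
          2 * c j * ((-1:ℝ)^k * ((2*j).choose (j-k)) * Real.cos (k*u)) := by
    have hswap : ∑ k ∈ Finset.Icc 1 m, ∑ j ∈ Finset.Icc k m,
        2 * c j * ((-1:ℝ)^k * ((2*j).choose (j-k)) * Real.cos (k*u))
        = ∑ j ∈ Finset.range (m+1), ∑ k ∈ Finset.Icc 1 j,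
          2 * c j * ((-1:ℝ)^k * ((2*j).choose (j-k)) * Real.cos (k*u)) := by
      refine Finset.sum_comm' ?_
      intro k j
      simp only [Finset.mem_Icc, Finset.mem_range, Nat.lt_succ_iff]
      omega
    rw [← hswap]
    refine Finset.sum_congr rfl fun k _ => ?_
    rw [gammaCoeff_eq, Finset.mul_sum, Finset.sum_mul]
    refine Finset.sum_congr rfl fun j _ => ?_
    simp only [hc]
    ring
  rw [h0, h1]
end
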